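/- arXiv:2209.08567 — 6 statements merged into one kernel-verified Lean document; each statement's English description precedes it below -/
import Mathlib

section
/- For all real numbers a and b, ∫_{-∞}^{∞} x² Φ(ax+b) φ(x) dx = Φ(b/√(1+a²)) − (a²b/(1+a²)^{3/2}) φ(b/√(1+a²)). -/
open MeasureTheory Real

/-- The standard normal probability density function φ. -/
noncomputable def normPdf (x : ℝ) : ℝ := (Real.sqrt (2 * Real.pi))⁻¹ * Real.exp (-x ^ 2 / 2)

/-- The standard normal cumulative distribution function Φ. -/
noncomputable def normCdf (x : ℝ) : ℝ := ∫ t in Set.Iic x, normPdf t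

open Set Filter Topology

lemma normPdf_eq (x : ℝ) :
    normPdf x = (Real.sqrt (2 * Real.pi))⁻¹ * Real.exp (-(1/2) * x ^ 2) := by
  unfold normPdf
  congr 1
  ring_nf

lemma normPdf_nonneg (x : ℝ) : 0 ≤ normPdf x :=
  mul_nonneg (inv_nonneg.2 (Real.sqrt_nonneg _)) (Real.exp_nonneg _)

lemma continuous_normPdf : Continuous normPdf := by
  unfold normPdf
  fun_prop

lemma sqrt_two_pi_pos : 0 < Real.sqrt (2 * Real.pi) :=
  Real.sqrt_pos.2 (by positivity)

lemma integrable_pow_mul_normPdf (n : ℕ) : Integrable (fun x : ℝ => x ^ n * normPdf x) := by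
  have h := integrable_rpow_mul_exp_neg_mul_sq (b := 1/2) one_half_pos
    (s := (n : ℝ)) (lt_of_lt_of_le neg_one_lt_zero (Nat.cast_nonneg n))
  refine (h.const_mul ((Real.sqrt (2 * Real.pi))⁻¹)).congr (Eventually.of_forall fun x => ?_)
  simp only [normPdf_eq, Real.rpow_natCast]
  ring

lemma integrable_normPdf : Integrable normPdf := by
  simpa using integrable_pow_mul_normPdf 0

lemma integrable_id_mul_normPdf : Integrable (fun x : ℝ => x * normPdf x) := by
  simpa using integrable_pow_mul_normPdf 1

lemma integrable_sq_mul_normPdf : Integrable (fun x : ℝ => x ^ 2 * normPdf x) :=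
  integrable_pow_mul_normPdf 2

lemma integral_normPdf : ∫ x : ℝ, normPdf x = 1 := by
  have h : (fun x : ℝ => normPdf x) =
      fun x : ℝ => (Real.sqrt (2 * Real.pi))⁻¹ * Real.exp (-(1/2) * x ^ 2) :=
    funext normPdf_eq
  rw [h, integral_const_mul, integral_gaussian, show Real.pi / (1/2) = 2 * Real.pi by ring,
    inv_mul_cancel₀ sqrt_two_pi_pos.ne']

lemma hasDerivAt_normPdf (x : ℝ) : HasDerivAt normPdf (-x * normPdf x) x := by
  have h1 : HasDerivAt (fun y : ℝ => -y ^ 2 / 2) (-x) x := by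
    have := (hasDerivAt_pow 2 x).neg.div_const 2
    refine this.congr_deriv ?_
    push_cast
    ring
  have h2 := h1.exp.const_mul (Real.sqrt (2 * Real.pi))⁻¹
  refine h2.congr_deriv ?_
  unfold normPdf
  ring

lemma tendsto_pow_mul_normPdf (n : ℕ) :
    Tendsto (fun x : ℝ => x ^ n * normPdf x) (cocompact ℝ) (𝓝 0) := by
  have h := (tendsto_rpow_abs_mul_exp_neg_mul_sq_cocompact one_half_pos (n : ℝ)).const_mul
    ((Real.sqrt (2 * Real.pi))⁻¹)
  rw [mul_zero] at h
  apply squeeze_zero_norm _ h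
  intro x
  rw [Real.norm_eq_abs, abs_mul, abs_pow, abs_of_nonneg (normPdf_nonneg x),
    Real.rpow_natCast, normPdf_eq]
  exact le_of_eq (by ring)

lemma tendsto_normPdf_atBot : Tendsto normPdf atBot (𝓝 0) := by
  have := (tendsto_pow_mul_normPdf 0).mono_left _root_.atBot_le_cocompact
  simpa using this

lemma tendsto_normPdf_atTop : Tendsto normPdf atTop (𝓝 0) := by
  have := (tendsto_pow_mul_normPdf 0).mono_left _root_.atTop_le_cocompact
  simpa using this

lemma integral_id_mul_normPdf : ∫ x : ℝ, x * normPdf x = 0 := by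
  have hd : ∀ x : ℝ, HasDerivAt (fun y : ℝ => -normPdf y) (x * normPdf x) x := fun x => by
    exact (hasDerivAt_normPdf x).neg.congr_deriv (by ring)
  have hbot : Tendsto (fun y : ℝ => -normPdf y) atBot (𝓝 0) := by
    simpa using tendsto_normPdf_atBot.neg
  have htop : Tendsto (fun y : ℝ => -normPdf y) atTop (𝓝 0) := by
    simpa using tendsto_normPdf_atTop.neg
  rw [integral_of_hasDerivAt_of_tendsto hd integrable_id_mul_normPdf hbot htop, sub_zero]

lemma integral_sq_mul_normPdf : ∫ x : ℝ, x ^ 2 * normPdf x = 1 := by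
  have hd : ∀ x : ℝ, HasDerivAt (fun y : ℝ => -(y * normPdf y))
      (x ^ 2 * normPdf x - normPdf x) x := by
    intro x
    have h := ((hasDerivAt_id x).mul (hasDerivAt_normPdf x)).neg
    refine h.congr_deriv ?_
    simp only [id_eq]
    ring
  have hi : Integrable (fun x : ℝ => x ^ 2 * normPdf x - normPdf x) :=
    integrable_sq_mul_normPdf.sub integrable_normPdf
  have hbot : Tendsto (fun y : ℝ => -(y * normPdf y)) atBot (𝓝 0) := by
    have := ((tendsto_pow_mul_normPdf 1).mono_left _root_.atBot_le_cocompact).neg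
    simpa using this
  have htop : Tendsto (fun y : ℝ => -(y * normPdf y)) atTop (𝓝 0) := by
    have := ((tendsto_pow_mul_normPdf 1).mono_left _root_.atTop_le_cocompact).neg
    simpa using this
  have h := integral_of_hasDerivAt_of_tendsto hd hi hbot htop
  rw [sub_zero] at h
  rwa [integral_sub integrable_sq_mul_normPdf integrable_normPdf, integral_normPdf,
    sub_eq_zero] at h

lemma hasDerivAt_normCdf (x : ℝ) : HasDerivAt normCdf (normPdf x) x := by
  have key : ∀ y : ℝ, normCdf y = normCdf 0 + ∫ t in (0:ℝ)..y, normPdf t := by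
    intro y
    have h := intervalIntegral.integral_Iic_sub_Iic (f := normPdf) (μ := volume)
      integrable_normPdf.integrableOn integrable_normPdf.integrableOn (a := 0) (b := y)
    unfold normCdf
    rw [← h]
    ring
  have hder : HasDerivAt (fun y : ℝ => ∫ t in (0:ℝ)..y, normPdf t) (normPdf x) x :=
    intervalIntegral.integral_hasDerivAt_right (integrable_normPdf.intervalIntegrable)
      (continuous_normPdf.stronglyMeasurable.stronglyMeasurableAtFilter)
      continuous_normPdf.continuousAt
  have h2 : HasDerivAt (fun y : ℝ => normCdf 0 + ∫ t in (0:ℝ)..y, normPdf t) (normPdf x) x :=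
    hder.const_add _
  exact h2.congr_of_eventuallyEq (Eventually.of_forall key)

lemma tendsto_normCdf_atBot : Tendsto normCdf atBot (𝓝 0) := by
  have h : Tendsto (fun r : ℝ => ∫ x : ℝ, (Iic r).indicator normPdf x) atBot
      (𝓝 (∫ _ : ℝ, (0:ℝ))) := by
    apply tendsto_integral_filter_of_dominated_convergence normPdf
    · exact Eventually.of_forall fun r =>
        (continuous_normPdf.measurable.indicator measurableSet_Iic).aestronglyMeasurable
    · refine Eventually.of_forall fun r => Eventually.of_forall fun x => ?_
      rw [Real.norm_eq_abs, abs_of_nonneg (Set.indicator_nonneg (fun y _ => normPdf_nonneg y) x)]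
      exact Set.indicator_le_self' (fun y _ => normPdf_nonneg y) x
    · exact integrable_normPdf
    · refine Eventually.of_forall fun x => ?_
      have hev : ∀ᶠ r in atBot, (Iic r).indicator normPdf x = 0 := by
        filter_upwards [eventually_lt_atBot x] with r hr
        exact Set.indicator_of_notMem (by simpa using hr.not_ge) _
      exact tendsto_const_nhds.congr' (hev.mono fun r h => h.symm)
  simp only [integral_zero] at h
  refine h.congr fun r => ?_
  rw [integral_indicator measurableSet_Iic]
  rfl

lemma integral_Iic_sq_mul_normPdf (c : ℝ) :
    ∫ u in Iic c, u ^ 2 * normPdf u = normCdf c - c * normPdf c := by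
  have hd : ∀ x ∈ Iic c, HasDerivAt (fun y : ℝ => normCdf y - y * normPdf y)
      (x ^ 2 * normPdf x) x := by
    intro x _
    have h := (hasDerivAt_normCdf x).sub ((hasDerivAt_id x).mul (hasDerivAt_normPdf x))
    refine h.congr_deriv ?_
    simp only [id_eq]
    ring
  have hb : Tendsto (fun y : ℝ => normCdf y - y * normPdf y) atBot (𝓝 0) := by
    have h1 := (tendsto_pow_mul_normPdf 1).mono_left _root_.atBot_le_cocompact
    have := tendsto_normCdf_atBot.sub h1
    simpa using this
  simpa using integral_Iic_of_hasDerivAt_of_tendsto' hd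
    integrable_sq_mul_normPdf.integrableOn hb

lemma integral_comp_affine (g : ℝ → ℝ) {s : ℝ} (hs : 0 < s) (d : ℝ) :
    ∫ x : ℝ, g (s * x + d) = s⁻¹ * ∫ y : ℝ, g y := by
  have h1 : (fun x : ℝ => g (s * x + d)) = fun x : ℝ => (fun v => g (v + d)) (s * x) := rfl
  rw [h1, Measure.integral_comp_mul_left (fun v => g (v + d)) s,
    integral_add_right_eq_self, smul_eq_mul, abs_of_pos (inv_pos.2 hs)]

lemma integrable_comp_affine {g : ℝ → ℝ} (hg : Integrable g) {s : ℝ} (hs : s ≠ 0) (d : ℝ) :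
    Integrable (fun x : ℝ => g (s * x + d)) :=
  (hg.comp_add_right d).comp_mul_left' hs

lemma setIntegral_Iic_comp_affine (f : ℝ → ℝ) {s : ℝ} (hs : 0 < s) (d c : ℝ) :
    ∫ u in Iic c, s * f (s * u + d) = ∫ t in Iic (s * c + d), f t := by
  rw [← integral_indicator measurableSet_Iic, ← integral_indicator measurableSet_Iic]
  have h : ∀ u : ℝ, (Iic c).indicator (fun u => s * f (s * u + d)) u
      = s * (Iic (s * c + d)).indicator f (s * u + d) := by
    intro u
    by_cases hu : u ∈ Iic c
    · rw [Set.indicator_of_mem hu, Set.indicator_of_mem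
        (mem_Iic.2 (add_le_add_left (mul_le_mul_of_nonneg_left (mem_Iic.1 hu) hs.le) d))]
    · rw [Set.indicator_of_notMem hu, Set.indicator_of_notMem, mul_zero]
      intro hmem
      exact hu (mem_Iic.2
        (le_of_mul_le_mul_left (le_of_add_le_add_right (mem_Iic.1 hmem)) hs))
  simp_rw [h]
  rw [integral_const_mul, integral_comp_affine _ hs d, ← mul_assoc,
    mul_inv_cancel₀ hs.ne', one_mul]

lemma integral_affine_normPdf {s : ℝ} (hs : 0 < s) (d : ℝ) :
    ∫ u : ℝ, s * normPdf (s * u + d) = 1 := by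
  rw [integral_const_mul, integral_comp_affine normPdf hs d, integral_normPdf,
    mul_one, mul_inv_cancel₀ hs.ne']

/-- For all real `a`, `b`:
`∫ x² Φ(ax+b) φ(x) dx = Φ(b/√(1+a²)) − (a²b/(1+a²)^{3/2}) φ(b/√(1+a²))`. -/
theorem stmt_0 (a b : ℝ) :
    ∫ x : ℝ, x ^ 2 * normCdf (a * x + b) * normPdf x =
      normCdf (b / Real.sqrt (1 + a ^ 2)) -
        a ^ 2 * b / (1 + a ^ 2) ^ ((3 : ℝ) / 2) * normPdf (b / Real.sqrt (1 + a ^ 2)) := by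
  have h0 : (0:ℝ) < 1 + a ^ 2 := by positivity
  set s : ℝ := Real.sqrt (1 + a ^ 2) with hs_def
  have hs : 0 < s := Real.sqrt_pos.2 h0
  have hs2 : s ^ 2 = 1 + a ^ 2 := Real.sq_sqrt h0.le
  set c : ℝ := b / s with hc_def
  have hkeyA : ∀ u x : ℝ, normPdf (s * u + a * x) * normPdf x
      = normPdf u * normPdf (s * x + a * u) := by
    intro u x
    simp only [normPdf]
    have harg : -(s * u + a * x) ^ 2 / 2 + -x ^ 2 / 2
        = -u ^ 2 / 2 + -(s * x + a * u) ^ 2 / 2 := by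
      linear_combination ((x ^ 2 - u ^ 2) / 2) * hs2
    rw [mul_mul_mul_comm, ← Real.exp_add, harg, Real.exp_add]
    ring
  have hkeyB : ∀ x : ℝ, normCdf (a * x + b) = ∫ u in Iic c, s * normPdf (s * u + a * x) := by
    intro x
    rw [setIntegral_Iic_comp_affine normPdf hs (a * x) c]
    have hsc : s * c + a * x = a * x + b := by
      rw [hc_def]
      field_simp
      ring
    rw [hsc]
    rfl
  have hinner : ∀ u : ℝ, (∫ x : ℝ, x ^ 2 * (s * normPdf (s * u + a * x)) * normPdf x)
      = normPdf u * ((1 + a ^ 2 * u ^ 2) / s ^ 2) := by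
    intro u
    have e1 : ∀ x : ℝ, x ^ 2 * (s * normPdf (s * u + a * x)) * normPdf x
        = (s * normPdf u) * (x ^ 2 * normPdf (s * x + a * u)) := by
      intro x
      calc x ^ 2 * (s * normPdf (s * u + a * x)) * normPdf x
          = (x ^ 2 * s) * (normPdf (s * u + a * x) * normPdf x) := by ring
        _ = (x ^ 2 * s) * (normPdf u * normPdf (s * x + a * u)) := by rw [hkeyA u x]
        _ = (s * normPdf u) * (x ^ 2 * normPdf (s * x + a * u)) := by ring
    simp_rw [e1]
    rw [integral_const_mul]
    have e3 := integral_comp_affine (fun y => ((y - a * u) / s) ^ 2 * normPdf y) hs (a * u)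
    simp only [add_sub_cancel_right] at e3
    have e3' : (∫ x : ℝ, x ^ 2 * normPdf (s * x + a * u))
        = s⁻¹ * ∫ y : ℝ, ((y - a * u) / s) ^ 2 * normPdf y := by
      rw [← e3]
      congr 1
      funext x
      rw [mul_div_cancel_left₀ _ hs.ne']
    rw [e3']
    have e4 : (∫ y : ℝ, ((y - a * u) / s) ^ 2 * normPdf y) = (1 + a ^ 2 * u ^ 2) / s ^ 2 := by
      have hfe : (fun y : ℝ => ((y - a * u) / s) ^ 2 * normPdf y)
          = fun y : ℝ => ((s ^ 2)⁻¹ * (y ^ 2 * normPdf y)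
            - (2 * a * u / s ^ 2) * (y * normPdf y)) + (a ^ 2 * u ^ 2 / s ^ 2) * normPdf y := by
        funext y
        field_simp
        ring
      have hi1 : Integrable (fun y : ℝ => (s ^ 2)⁻¹ * (y ^ 2 * normPdf y)
          - (2 * a * u / s ^ 2) * (y * normPdf y)) :=
        (integrable_sq_mul_normPdf.const_mul _).sub (integrable_id_mul_normPdf.const_mul _)
      have hi2 : Integrable (fun y : ℝ => (a ^ 2 * u ^ 2 / s ^ 2) * normPdf y) :=
        integrable_normPdf.const_mul _
      rw [hfe, integral_add hi1 hi2,
        integral_sub (integrable_sq_mul_normPdf.const_mul _)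
          (integrable_id_mul_normPdf.const_mul _),
        integral_const_mul, integral_const_mul, integral_const_mul,
        integral_sq_mul_normPdf, integral_id_mul_normPdf, integral_normPdf]
      field_simp
      ring
    rw [e4]
    field_simp
  have hFmeas : AEStronglyMeasurable (Function.uncurry fun x u : ℝ =>
      (Iic c).indicator (fun u => x ^ 2 * (s * normPdf (s * u + a * x)) * normPdf x) u)
      ((volume : Measure ℝ).prod volume) := by
    have heq : (Function.uncurry fun x u : ℝ =>
        (Iic c).indicator (fun u => x ^ 2 * (s * normPdf (s * u + a * x)) * normPdf x) u)
        = ((univ : Set ℝ) ×ˢ Iic c).indicator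
          (fun p : ℝ × ℝ => p.1 ^ 2 * (s * normPdf (s * p.2 + a * p.1)) * normPdf p.1) := by
      funext p
      by_cases hp : p.2 ∈ Iic c
      · simp [Function.uncurry, Set.indicator_of_mem, hp, Set.mem_prod]
      · simp [Function.uncurry, Set.indicator_of_notMem, hp, Set.mem_prod]
    rw [heq]
    exact ((((continuous_fst.pow 2).mul (continuous_const.mul (continuous_normPdf.comp
      ((continuous_const.mul continuous_snd).add (continuous_const.mul continuous_fst))))).mul
      (continuous_normPdf.comp continuous_fst)).measurable.indicator
      (MeasurableSet.univ.prod measurableSet_Iic)).aestronglyMeasurable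
  have hFx : ∀ x : ℝ, Integrable (fun u : ℝ =>
      (Iic c).indicator (fun u => x ^ 2 * (s * normPdf (s * u + a * x)) * normPdf x) u) := by
    intro x
    refine Integrable.indicator ?_ measurableSet_Iic
    have h1 : Integrable fun u : ℝ => normPdf (s * u + a * x) :=
      integrable_comp_affine integrable_normPdf hs.ne' _
    exact ((h1.const_mul (x ^ 2 * s)).mul_const (normPdf x)).congr
      (Eventually.of_forall fun u => by ring)
  have hFint : Integrable (Function.uncurry fun x u : ℝ =>
      (Iic c).indicator (fun u => x ^ 2 * (s * normPdf (s * u + a * x)) * normPdf x) u)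
      ((volume : Measure ℝ).prod volume) := by
    rw [integrable_prod_iff hFmeas]
    refine ⟨Eventually.of_forall fun x => hFx x, ?_⟩
    refine Integrable.mono' integrable_sq_mul_normPdf hFmeas.norm.integral_prod_right'
      (Eventually.of_forall fun x => ?_)
    have hnn : ∀ u : ℝ, 0 ≤ (Iic c).indicator
        (fun u => x ^ 2 * (s * normPdf (s * u + a * x)) * normPdf x) u :=
      fun u => Set.indicator_nonneg (fun u _ => mul_nonneg (mul_nonneg (sq_nonneg x)
        (mul_nonneg hs.le (normPdf_nonneg _))) (normPdf_nonneg _)) u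
    rw [Real.norm_eq_abs, abs_of_nonneg (integral_nonneg fun u => norm_nonneg _)]
    calc (∫ u : ℝ, ‖(Iic c).indicator
          (fun u => x ^ 2 * (s * normPdf (s * u + a * x)) * normPdf x) u‖)
        ≤ ∫ u : ℝ, (x ^ 2 * normPdf x) * (s * normPdf (s * u + a * x)) := by
          refine integral_mono (hFx x).norm
            (((integrable_comp_affine integrable_normPdf hs.ne' (a * x)).const_mul
              (x ^ 2 * normPdf x * s)).congr (Eventually.of_forall fun u => by ring))
            fun u => ?_
          rw [Real.norm_eq_abs, abs_of_nonneg (hnn u)]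
          by_cases hu : u ∈ Iic c
          · rw [Set.indicator_of_mem hu]
            exact le_of_eq (by ring)
          · rw [Set.indicator_of_notMem hu]
            exact mul_nonneg (mul_nonneg (sq_nonneg x) (normPdf_nonneg x))
              (mul_nonneg hs.le (normPdf_nonneg _))
      _ = (x ^ 2 * normPdf x) * ∫ u : ℝ, s * normPdf (s * u + a * x) := integral_const_mul _ _
      _ = x ^ 2 * normPdf x := by rw [integral_affine_normPdf hs, mul_one]
  calc ∫ x : ℝ, x ^ 2 * normCdf (a * x + b) * normPdf x
      = ∫ x : ℝ, ∫ u : ℝ, (Iic c).indicator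
          (fun u => x ^ 2 * (s * normPdf (s * u + a * x)) * normPdf x) u := by
        refine integral_congr_ae (Eventually.of_forall fun x => ?_)
        show x ^ 2 * normCdf (a * x + b) * normPdf x = ∫ u : ℝ, (Iic c).indicator
          (fun u => x ^ 2 * (s * normPdf (s * u + a * x)) * normPdf x) u
        rw [hkeyB x]
        calc x ^ 2 * (∫ u in Iic c, s * normPdf (s * u + a * x)) * normPdf x
            = (x ^ 2 * normPdf x) * ∫ u in Iic c, s * normPdf (s * u + a * x) := by ring
          _ = ∫ u in Iic c, (x ^ 2 * normPdf x) * (s * normPdf (s * u + a * x)) :=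
              (integral_const_mul _ _).symm
          _ = ∫ u in Iic c, x ^ 2 * (s * normPdf (s * u + a * x)) * normPdf x :=
              integral_congr_ae (Eventually.of_forall fun u => by ring)
          _ = ∫ u : ℝ, (Iic c).indicator
              (fun u => x ^ 2 * (s * normPdf (s * u + a * x)) * normPdf x) u :=
              (integral_indicator measurableSet_Iic).symm
    _ = ∫ u : ℝ, ∫ x : ℝ, (Iic c).indicator
          (fun u => x ^ 2 * (s * normPdf (s * u + a * x)) * normPdf x) u :=
        integral_integral_swap hFint
    _ = ∫ u : ℝ, (Iic c).indicator
          (fun u => normPdf u * ((1 + a ^ 2 * u ^ 2) / s ^ 2)) u := by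
        refine integral_congr_ae (Eventually.of_forall fun u => ?_)
        show (∫ x : ℝ, (Iic c).indicator
            (fun u => x ^ 2 * (s * normPdf (s * u + a * x)) * normPdf x) u)
          = (Iic c).indicator (fun u => normPdf u * ((1 + a ^ 2 * u ^ 2) / s ^ 2)) u
        by_cases hu : u ∈ Iic c
        · rw [Set.indicator_of_mem hu]
          have h1 : ∀ x : ℝ, (Iic c).indicator
              (fun u => x ^ 2 * (s * normPdf (s * u + a * x)) * normPdf x) u
              = x ^ 2 * (s * normPdf (s * u + a * x)) * normPdf x :=
            fun x => Set.indicator_of_mem hu _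
          simp_rw [h1]
          exact hinner u
        · rw [Set.indicator_of_notMem hu]
          have h1 : ∀ x : ℝ, (Iic c).indicator
              (fun u => x ^ 2 * (s * normPdf (s * u + a * x)) * normPdf x) u = 0 :=
            fun x => Set.indicator_of_notMem hu _
          simp_rw [h1]
          exact integral_zero _ _
    _ = ∫ u in Iic c, normPdf u * ((1 + a ^ 2 * u ^ 2) / s ^ 2) :=
        integral_indicator measurableSet_Iic
    _ = (normCdf c + a ^ 2 * (normCdf c - c * normPdf c)) / s ^ 2 := by
        have hfe : (fun u : ℝ => normPdf u * ((1 + a ^ 2 * u ^ 2) / s ^ 2))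
            = fun u : ℝ => (s ^ 2)⁻¹ * normPdf u + (a ^ 2 / s ^ 2) * (u ^ 2 * normPdf u) := by
          funext u
          field_simp
        rw [hfe, integral_add ((integrable_normPdf.integrableOn).const_mul _)
            ((integrable_sq_mul_normPdf.integrableOn).const_mul _),
          integral_const_mul, integral_const_mul, integral_Iic_sq_mul_normPdf,
          show (∫ u in Iic c, normPdf u) = normCdf c from rfl]
        field_simp
    _ = normCdf c - a ^ 2 * b / (1 + a ^ 2) ^ ((3 : ℝ) / 2) * normPdf c := by
        have hpow : (1 + a ^ 2) ^ ((3 : ℝ) / 2) = s ^ 3 := by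
          rw [hs_def, Real.sqrt_eq_rpow, ← Real.rpow_natCast ((1 + a ^ 2) ^ ((1:ℝ)/2)) 3,
            ← Real.rpow_mul h0.le]
          norm_num
        rw [hpow, hc_def]
        have hb' : b / s * s = b := div_mul_cancel₀ b hs.ne'
        field_simp
        linear_combination (-(normCdf (b / s) * s)) * hs2
end

section
/- Let U = (n₁X̄_S + n₂Ȳ)/(n₁+n₂) − μ_S. Then for every (μ₁, μ₂) ∈ ℝ², E[U²] = σ²/(n₁+n₂). Equivalently, the estimator δ_M(X̄₁, X̄₂, Ȳ) = (n₁X̄_S + n₂Ȳ)/(n₁+n₂) has constant risk R((μ₁,μ₂), δ_M) = σ²/(n₁+n₂). -/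
open MeasureTheory ProbabilityTheory Real
open scoped NNReal ENNReal

variable {v : ℝ≥0}

/-- Integral against a Gaussian as a Lebesgue integral against the pdf. -/
lemma my_integral_gaussianReal (m : ℝ) (hv : v ≠ 0) (g : ℝ → ℝ) :
    ∫ x, g x ∂(gaussianReal m v) = ∫ x, gaussianPDFReal m v x * g x := by
  rw [gaussianReal_of_var_ne_zero _ hv]
  have h1 : gaussianPDF m v = fun x => ((gaussianPDFReal m v x).toNNReal : ℝ≥0∞) := rfl
  rw [h1, integral_withDensity_eq_integral_smul
    (measurable_gaussianPDFReal m v).real_toNNReal g]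
  congr 1 with x
  simp [NNReal.smul_def, Real.coe_toNNReal _ (gaussianPDFReal_nonneg m v x)]

lemma my_integrable_gaussianReal_iff (m : ℝ) (hv : v ≠ 0) (g : ℝ → ℝ) :
    Integrable g (gaussianReal m v) ↔
      Integrable (fun x => gaussianPDFReal m v x * g x) volume := by
  rw [gaussianReal_of_var_ne_zero _ hv]
  have h1 : gaussianPDF m v = fun x => ((gaussianPDFReal m v x).toNNReal : ℝ≥0∞) := rfl
  rw [h1, integrable_withDensity_iff_integrable_smul
    (measurable_gaussianPDFReal m v).real_toNNReal]
  constructor <;> intro h <;> refine h.congr (Filter.Eventually.of_forall fun x => ?_) <;>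
    simp [NNReal.smul_def, Real.coe_toNNReal _ (gaussianPDFReal_nonneg m v x)]

lemma my_pdf0 (hv : v ≠ 0) (x : ℝ) :
    gaussianPDFReal 0 v x = (√(2 * π * v))⁻¹ * rexp (-(2 * (v:ℝ))⁻¹ * x ^ 2) := by
  have hv' : (0:ℝ) < v := by positivity
  rw [gaussianPDFReal]
  congr 1
  rw [sub_zero]
  congr 1
  field_simp

lemma my_b_pos (hv : v ≠ 0) : 0 < (2 * (v:ℝ))⁻¹ := by
  have : (0:ℝ) < v := by
    have := hv
    positivity
  positivity

lemma my_integrable_id (hv : v ≠ 0) :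
    Integrable (fun x => x) (gaussianReal 0 v) := by
  rw [my_integrable_gaussianReal_iff 0 hv]
  have : (fun x => gaussianPDFReal 0 v x * x)
      = fun x => (√(2 * π * v))⁻¹ * (x * rexp (-(2 * (v:ℝ))⁻¹ * x ^ 2)) := by
    funext x; rw [my_pdf0 hv]; ring
  rw [this]
  exact (integrable_mul_exp_neg_mul_sq (my_b_pos hv)).const_mul _

lemma my_integral_id (hv : v ≠ 0) :
    ∫ x, x ∂(gaussianReal 0 v) = 0 := by
  rw [my_integral_gaussianReal 0 hv]
  set f : ℝ → ℝ := fun x => gaussianPDFReal 0 v x * x with hf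
  have hodd : ∀ x, f (-x) = -f x := by
    intro x
    simp only [hf, my_pdf0 hv, neg_sq]
    ring
  have h1 : ∫ x, f (-x) = ∫ x, f x := integral_neg_eq_self f volume
  have h2 : ∫ x, f (-x) = -∫ x, f x := by
    simp_rw [hodd]; exact integral_neg f
  linarith [h1.symm.trans h2]

lemma my_integrable_sq (hv : v ≠ 0) :
    Integrable (fun x => x ^ 2) (gaussianReal 0 v) := by
  rw [my_integrable_gaussianReal_iff 0 hv]
  have : (fun x => gaussianPDFReal 0 v x * x ^ 2)
      = fun x => (√(2 * π * v))⁻¹ * (x ^ (2:ℝ) * rexp (-(2 * (v:ℝ))⁻¹ * x ^ 2)) := by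
    funext x
    rw [my_pdf0 hv, show (2:ℝ) = ((2:ℕ):ℝ) by norm_num, Real.rpow_natCast]
    ring
  rw [this]
  exact (integrable_rpow_mul_exp_neg_mul_sq (my_b_pos hv) (by norm_num)).const_mul _

lemma my_integral_sq (hv : v ≠ 0) :
    ∫ x, x ^ 2 ∂(gaussianReal 0 v) = v := by
  have hvpos : (0:ℝ) < v := by positivity
  set b : ℝ := (2 * (v:ℝ))⁻¹ with hbdef
  have hb : 0 < b := my_b_pos hv
  set c : ℝ := (√(2 * π * v))⁻¹ with hcdef
  rw [my_integral_gaussianReal 0 hv]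
  have h0 : (fun x => gaussianPDFReal 0 v x * x ^ 2)
      = fun x => c * (x ^ 2 * rexp (-b * x ^ 2)) := by
    funext x; rw [my_pdf0 hv]; ring
  rw [h0, integral_const_mul]
  set f : ℝ → ℝ := fun x => x ^ 2 * rexp (-b * x ^ 2) with hfdef
  have hfi : Integrable f volume := by
    have : f = fun x => x ^ (2:ℝ) * rexp (-b * x ^ 2) := by
      funext x
      rw [show (2:ℝ) = ((2:ℕ):ℝ) by norm_num, Real.rpow_natCast]
    rw [this]
    exact integrable_rpow_mul_exp_neg_mul_sq hb (by norm_num)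
  have heven : ∀ x, f (-x) = f x := by intro x; simp [hfdef]
  have hIoi : ∫ x in Set.Ioi (0:ℝ), f x = b ^ (-(3:ℝ)/2) * (1/2) * Real.Gamma (3/2) := by
    have h1 : ∫ x in Set.Ioi (0:ℝ), f x
        = ∫ x in Set.Ioi (0:ℝ), x ^ (2:ℝ) * rexp (-b * x ^ (2:ℝ)) := by
      refine setIntegral_congr_fun measurableSet_Ioi (fun x _ => ?_)
      rw [show (2:ℝ) = ((2:ℕ):ℝ) by norm_num, Real.rpow_natCast]
    rw [h1, integral_rpow_mul_exp_neg_mul_rpow (by norm_num) (by norm_num) hb]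
    norm_num
  have hsplit : ∫ x, f x = 2 * ∫ x in Set.Ioi (0:ℝ), f x := by
    have h2 : ∫ x in Set.Iic (0:ℝ), f x = ∫ x in Set.Ioi (0:ℝ), f x := by
      have h := integral_comp_neg_Ioi (0:ℝ) f
      simp_rw [heven, neg_zero] at h
      exact h.symm
    have h3 := intervalIntegral.integral_Iic_add_Ioi (b := (0:ℝ))
      hfi.integrableOn hfi.integrableOn
    rw [← h3, h2]; ring
  rw [hsplit, hIoi]
  have hGamma : Real.Gamma (3/2) = √π / 2 := by
    rw [show (3/2 : ℝ) = 1/2 + 1 by norm_num, Real.Gamma_add_one (by norm_num),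
      Real.Gamma_one_half_eq]
    ring
  have h2v : (0:ℝ) < 2 * (v:ℝ) := by positivity
  have hbval : b ^ (-(3:ℝ)/2) = (2*(v:ℝ)) * √(2*(v:ℝ)) := by
    rw [hbdef, Real.inv_rpow h2v.le, show (-(3:ℝ)/2) = -(3/2) by norm_num,
      Real.rpow_neg h2v.le, inv_inv, show ((3:ℝ)/2) = 1 + 1/2 by norm_num,
      Real.rpow_add h2v, Real.rpow_one, ← Real.sqrt_eq_rpow]
  have hcval : c = (√(2*(v:ℝ)) * √π)⁻¹ := by
    rw [hcdef, show 2 * π * (v:ℝ) = (2*(v:ℝ)) * π by ring, Real.sqrt_mul h2v.le]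
  have hs1 : (0:ℝ) < √(2*(v:ℝ)) := Real.sqrt_pos.mpr h2v
  have hs2 : (0:ℝ) < √π := Real.sqrt_pos.mpr Real.pi_pos
  rw [hGamma, hbval, hcval]
  field_simp

lemma my_shift (m : ℝ) : (gaussianReal 0 v).map (· + m) = gaussianReal m v := by
  rw [gaussianReal_map_add_const, zero_add]

lemma my_emb_add (m : ℝ) : MeasurableEmbedding (fun x : ℝ => x + m) :=
  (MeasurableEquiv.addRight m).measurableEmbedding

lemma my_integral_shift (m : ℝ) (g : ℝ → ℝ) :
    ∫ x, g x ∂(gaussianReal m v) = ∫ x, g (x + m) ∂(gaussianReal 0 v) := by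
  rw [← my_shift m, (my_emb_add m).integral_map]

lemma my_integrable_shift (m : ℝ) (g : ℝ → ℝ) :
    Integrable g (gaussianReal m v) ↔
      Integrable (fun x => g (x + m)) (gaussianReal 0 v) := by
  rw [← my_shift m, (my_emb_add m).integrable_map_iff]
  rfl

lemma my_integrable_sub_sq (hv : v ≠ 0) (m : ℝ) :
    Integrable (fun x => (x - m) ^ 2) (gaussianReal m v) := by
  rw [my_integrable_shift m]
  simpa using my_integrable_sq hv

lemma my_integral_sub_sq (hv : v ≠ 0) (m : ℝ) :
    ∫ x, (x - m) ^ 2 ∂(gaussianReal m v) = v := by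
  rw [my_integral_shift m]
  simpa using my_integral_sq hv

lemma my_integrable_sub (hv : v ≠ 0) (m : ℝ) :
    Integrable (fun x => x - m) (gaussianReal m v) := by
  rw [my_integrable_shift m]
  simpa using my_integrable_id hv

lemma my_integral_sub (hv : v ≠ 0) (m : ℝ) :
    ∫ x, x - m ∂(gaussianReal m v) = 0 := by
  rw [my_integral_shift m]
  simpa using my_integral_id hv

/-- Second moment of an affine function of a Gaussian. -/
lemma my_key_inner (hv : v ≠ 0) (a c m : ℝ) :
    ∫ y, (a + c * (y - m)) ^ 2 ∂(gaussianReal m v) = a ^ 2 + c ^ 2 * v := by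
  have h1 : (fun y => (a + c * (y - m)) ^ 2)
      = fun y => (a ^ 2 + (2 * a * c) * (y - m)) + c ^ 2 * (y - m) ^ 2 := by
    funext y; ring
  rw [h1]
  have hint1 : Integrable (fun y => a ^ 2 + (2 * a * c) * (y - m)) (gaussianReal m v) :=
    (integrable_const _).add ((my_integrable_sub hv m).const_mul _)
  have hint2 : Integrable (fun y => c ^ 2 * (y - m) ^ 2) (gaussianReal m v) :=
    (my_integrable_sub_sq hv m).const_mul _
  rw [integral_add hint1 hint2, integral_add (integrable_const _)
    ((my_integrable_sub hv m).const_mul _), integral_const, integral_const_mul,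
    integral_const_mul, my_integral_sub hv m, my_integral_sub_sq hv m]
  simp

lemma my_gauss_neg (hv : v ≠ 0) :
    (gaussianReal 0 v).map (fun x : ℝ => -x) = gaussianReal 0 v := by
  have h := gaussianReal_map_const_mul (μ := 0) (v := v) (-1)
  have h2 : (fun x : ℝ => (-1) * x) = fun x : ℝ => -x := by funext x; ring
  rw [h2] at h
  rw [h]
  congr 1
  · ring
  · ext
    norm_num

lemma my_fst_sq_int {μ ν : Measure ℝ} [SFinite μ] [SFinite ν] [IsProbabilityMeasure ν]
    (h : Integrable (fun x : ℝ => x ^ 2) μ) :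
    Integrable (fun p : ℝ × ℝ => p.1 ^ 2) (μ.prod ν) := by
  have := h.mul_prod (integrable_const (1:ℝ) (μ := ν))
  simpa using this

lemma my_snd_sq_int {μ ν : Measure ℝ} [SFinite μ] [SFinite ν] [IsProbabilityMeasure μ]
    (h : Integrable (fun x : ℝ => x ^ 2) ν) :
    Integrable (fun p : ℝ × ℝ => p.2 ^ 2) (μ.prod ν) := by
  have := (integrable_const (1:ℝ) (μ := μ)).mul_prod h
  simpa using this

/-- The key symmetry identity. -/
lemma my_sym (hv : v ≠ 0) (μ₁ μ₂ : ℝ) :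
    ∫ p, (if p.2 ≤ p.1 then (p.1 - μ₁) ^ 2 else (p.2 - μ₂) ^ 2)
      ∂((gaussianReal μ₁ v).prod (gaussianReal μ₂ v)) = v := by
  set γ := gaussianReal 0 v with hγ
  have hprod : (gaussianReal μ₁ v).prod (gaussianReal μ₂ v)
      = (γ.prod γ).map (Prod.map (· + μ₁) (· + μ₂)) := by
    rw [← my_shift (v := v) μ₁, ← my_shift (v := v) μ₂]
    exact Measure.map_prod_map _ _ (measurable_add_const μ₁) (measurable_add_const μ₂)
  have hsetm : MeasurableSet {p : ℝ × ℝ | p.2 ≤ p.1} :=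
    measurableSet_le measurable_snd measurable_fst
  have hFm : Measurable (fun p : ℝ × ℝ =>
      if p.2 ≤ p.1 then (p.1 - μ₁) ^ 2 else (p.2 - μ₂) ^ 2) :=
    Measurable.ite hsetm (((measurable_fst.sub_const μ₁)).pow_const 2)
      ((measurable_snd.sub_const μ₂).pow_const 2)
  rw [hprod, integral_map ((measurable_add_const μ₁).prodMap
      (measurable_add_const μ₂)).aemeasurable hFm.aestronglyMeasurable]
  have hsimp : (fun q : ℝ × ℝ =>
      if (Prod.map (· + μ₁) (· + μ₂) q).2 ≤ (Prod.map (· + μ₁) (· + μ₂) q).1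
        then ((Prod.map (· + μ₁) (· + μ₂) q).1 - μ₁) ^ 2
        else ((Prod.map (· + μ₁) (· + μ₂) q).2 - μ₂) ^ 2)
      = fun q : ℝ × ℝ => if q.2 + μ₂ ≤ q.1 + μ₁ then q.1 ^ 2 else q.2 ^ 2 := by
    funext q
    simp [Prod.map]
  rw [hsimp]
  -- split into two pieces
  set G1 : ℝ × ℝ → ℝ := fun q => if q.2 + μ₂ ≤ q.1 + μ₁ then q.1 ^ 2 else 0 with hG1
  set G2 : ℝ × ℝ → ℝ := fun q => if q.2 + μ₂ ≤ q.1 + μ₁ then 0 else q.2 ^ 2 with hG2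
  have hsetm2 : MeasurableSet {q : ℝ × ℝ | q.2 + μ₂ ≤ q.1 + μ₁} :=
    measurableSet_le (measurable_snd.add_const μ₂) (measurable_fst.add_const μ₁)
  have hG1m : Measurable G1 :=
    Measurable.ite hsetm2 (measurable_fst.pow_const 2) measurable_const
  have hG2m : Measurable G2 :=
    Measurable.ite hsetm2 measurable_const (measurable_snd.pow_const 2)
  have hsq1 : Integrable (fun p : ℝ × ℝ => p.1 ^ 2) (γ.prod γ) :=
    my_fst_sq_int (my_integrable_sq hv)
  have hsq2 : Integrable (fun p : ℝ × ℝ => p.2 ^ 2) (γ.prod γ) :=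
    my_snd_sq_int (my_integrable_sq hv)
  have hG1i : Integrable G1 (γ.prod γ) := by
    refine hsq1.mono' hG1m.aestronglyMeasurable (Filter.Eventually.of_forall fun q => ?_)
    show ‖if q.2 + μ₂ ≤ q.1 + μ₁ then q.1 ^ 2 else (0:ℝ)‖ ≤ q.1 ^ 2
    rw [Real.norm_eq_abs]
    by_cases h : q.2 + μ₂ ≤ q.1 + μ₁
    · rw [if_pos h, abs_of_nonneg (sq_nonneg _)]
    · rw [if_neg h]
      simpa using sq_nonneg q.1
  have hG2i : Integrable G2 (γ.prod γ) := by
    refine hsq2.mono' hG2m.aestronglyMeasurable (Filter.Eventually.of_forall fun q => ?_)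
    show ‖if q.2 + μ₂ ≤ q.1 + μ₁ then (0:ℝ) else q.2 ^ 2‖ ≤ q.2 ^ 2
    rw [Real.norm_eq_abs]
    by_cases h : q.2 + μ₂ ≤ q.1 + μ₁
    · rw [if_pos h]
      simpa using sq_nonneg q.2
    · rw [if_neg h, abs_of_nonneg (sq_nonneg _)]
  have hsplitfun : (fun q : ℝ × ℝ => if q.2 + μ₂ ≤ q.1 + μ₁ then q.1 ^ 2 else q.2 ^ 2)
      = fun q => G1 q + G2 q := by
    funext q
    rw [hG1, hG2]
    by_cases h : q.2 + μ₂ ≤ q.1 + μ₁ <;> simp [h]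
  rw [hsplitfun, integral_add hG1i hG2i]
  -- reflection invariance
  have hRm : Measurable (fun q : ℝ × ℝ => (-q.2, -q.1)) :=
    (measurable_snd.neg).prodMk (measurable_fst.neg)
  have hRmap : (γ.prod γ).map (fun q : ℝ × ℝ => (-q.2, -q.1)) = γ.prod γ := by
    have h1 : (fun q : ℝ × ℝ => (-q.2, -q.1))
        = (Prod.map (fun x : ℝ => -x) (fun x : ℝ => -x)) ∘ Prod.swap := by
      funext q; rfl
    rw [h1, ← Measure.map_map (measurable_neg.prodMap measurable_neg) measurable_swap,
      Measure.prod_swap,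
      ← Measure.map_prod_map _ _ measurable_neg measurable_neg, my_gauss_neg hv]
  have hG2R : ∀ q : ℝ × ℝ, G2 (-q.2, -q.1) = (if q.2 + μ₂ ≤ q.1 + μ₁ then 0 else q.1 ^ 2) := by
    intro q
    show (if -q.1 + μ₂ ≤ -q.2 + μ₁ then (0:ℝ) else (-q.1) ^ 2)
      = if q.2 + μ₂ ≤ q.1 + μ₁ then (0:ℝ) else q.1 ^ 2
    by_cases h : q.2 + μ₂ ≤ q.1 + μ₁
    · rw [if_pos (by linarith : -q.1 + μ₂ ≤ -q.2 + μ₁), if_pos h]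
    · rw [if_neg (fun hc => h (by linarith)), if_neg h, neg_sq]
  have hG2eq : ∫ q, G2 q ∂(γ.prod γ)
      = ∫ q, (if q.2 + μ₂ ≤ q.1 + μ₁ then 0 else q.1 ^ 2) ∂(γ.prod γ) := by
    conv_lhs => rw [← hRmap]
    rw [integral_map hRm.aemeasurable hG2m.aestronglyMeasurable]
    exact integral_congr_ae (Filter.Eventually.of_forall fun q => hG2R q)
  rw [hG2eq]
  have hG2i' : Integrable (fun q : ℝ × ℝ => if q.2 + μ₂ ≤ q.1 + μ₁ then 0 else q.1 ^ 2)
      (γ.prod γ) := by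
    refine hsq1.mono' (Measurable.ite hsetm2 measurable_const
      (measurable_fst.pow_const 2)).aestronglyMeasurable
      (Filter.Eventually.of_forall fun q => ?_)
    show ‖if q.2 + μ₂ ≤ q.1 + μ₁ then (0:ℝ) else q.1 ^ 2‖ ≤ q.1 ^ 2
    rw [Real.norm_eq_abs]
    by_cases h : q.2 + μ₂ ≤ q.1 + μ₁
    · rw [if_pos h]
      simpa using sq_nonneg q.1
    · rw [if_neg h, abs_of_nonneg (sq_nonneg _)]
  rw [← integral_add hG1i hG2i']
  have hfin : (fun q : ℝ × ℝ => G1 q + (if q.2 + μ₂ ≤ q.1 + μ₁ then 0 else q.1 ^ 2))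
      = fun q : ℝ × ℝ => q.1 ^ 2 := by
    funext q
    rw [hG1]
    by_cases h : q.2 + μ₂ ≤ q.1 + μ₁ <;> simp [h]
  rw [hfin, integral_fun_fst (f := fun x : ℝ => x ^ 2)]
  simp [hγ, my_integral_sq hv]
lemma my_bound_aux (n₁ n₂ M s m : ℝ) (h1 : 0 < n₁) (h2 : 0 < n₂) :
    ((n₁ * M + n₂ * s) / (n₁ + n₂) - m) ^ 2 ≤ 3 * (M ^ 2 + s ^ 2 + m ^ 2) := by
  have hN0 : 0 < n₁ + n₂ := by linarith
  have key : ((n₁ * M + n₂ * s) / (n₁ + n₂)) ^ 2 ≤ M ^ 2 + s ^ 2 := by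
    rw [div_pow, div_le_iff₀ (by positivity)]
    nlinarith [sq_nonneg (n₁ * M - n₂ * s), sq_nonneg (n₁ * s - n₂ * M),
      mul_pos h1 h2, sq_nonneg (M - s), sq_nonneg (M + s)]
  nlinarith [sq_nonneg ((n₁ * M + n₂ * s) / (n₁ + n₂) + m), sq_nonneg m]


set_option maxHeartbeats 1000000 in
/-- In the two-stage drop-the-losers model, for every `(μ₁, μ₂)`, the estimator
`δ_M = (n₁ X̄_S + n₂ Ȳ)/(n₁+n₂)` satisfies `E[(δ_M − μ_S)²] = σ²/(n₁+n₂)`,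
i.e. it has constant risk `σ²/(n₁+n₂)` under squared error loss. -/
theorem stmt_2 {Ω : Type} [MeasurableSpace Ω]
    (n₁ n₂ : ℕ) (hn₁ : 0 < n₁) (hn₂ : 0 < n₂) (σ : ℝ) (hσ : 0 < σ)
    (P : ℝ → ℝ → Measure Ω) (hP : ∀ μ₁ μ₂, IsProbabilityMeasure (P μ₁ μ₂))
    (X₁ X₂ Y₁ Y₂ : Ω → ℝ)
    (hmX₁ : Measurable X₁) (hmX₂ : Measurable X₂)
    (hmY₁ : Measurable Y₁) (hmY₂ : Measurable Y₂)
    (hIndep : ∀ μ₁ μ₂ : ℝ, iIndepFun ![X₁, X₂, Y₁, Y₂] (P μ₁ μ₂))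
    (hX₁ : ∀ μ₁ μ₂ : ℝ,
      Measure.map X₁ (P μ₁ μ₂) = gaussianReal μ₁ (Real.toNNReal (σ ^ 2 / n₁)))
    (hX₂ : ∀ μ₁ μ₂ : ℝ,
      Measure.map X₂ (P μ₁ μ₂) = gaussianReal μ₂ (Real.toNNReal (σ ^ 2 / n₁)))
    (hY₁ : ∀ μ₁ μ₂ : ℝ,
      Measure.map Y₁ (P μ₁ μ₂) = gaussianReal μ₁ (Real.toNNReal (σ ^ 2 / n₂)))
    (hY₂ : ∀ μ₁ μ₂ : ℝ,
      Measure.map Y₂ (P μ₁ μ₂) = gaussianReal μ₂ (Real.toNNReal (σ ^ 2 / n₂)))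
    (Ybar XS : Ω → ℝ) (μS : ℝ → ℝ → Ω → ℝ)
    (hYbar : Ybar = fun ω => if X₁ ω ≥ X₂ ω then Y₁ ω else Y₂ ω)
    (hXS : XS = fun ω => max (X₁ ω) (X₂ ω))
    (hμS : μS = fun μ₁ μ₂ ω => if X₁ ω ≥ X₂ ω then μ₁ else μ₂) :
    ∀ μ₁ μ₂ : ℝ,
      (∫ ω, ((n₁ * XS ω + n₂ * Ybar ω) / ((n₁ : ℝ) + n₂) - μS μ₁ μ₂ ω) ^ 2 ∂(P μ₁ μ₂)) =
        σ ^ 2 / ((n₁ : ℝ) + n₂) := by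
  subst hYbar hXS hμS
  intro μ₁ μ₂
  have hPP : IsProbabilityMeasure (P μ₁ μ₂) := hP μ₁ μ₂
  -- variances
  set v₁ : ℝ≥0 := Real.toNNReal (σ ^ 2 / n₁) with hv₁def
  set v₂ : ℝ≥0 := Real.toNNReal (σ ^ 2 / n₂) with hv₂def
  have hn₁R : (0:ℝ) < n₁ := Nat.cast_pos.mpr hn₁
  have hn₂R : (0:ℝ) < n₂ := Nat.cast_pos.mpr hn₂
  have hv₁ : v₁ ≠ 0 := by
    simp only [hv₁def, ne_eq, Real.toNNReal_eq_zero, not_le]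
    positivity
  have hv₂ : v₂ ≠ 0 := by
    simp only [hv₂def, ne_eq, Real.toNNReal_eq_zero, not_le]
    positivity
  have hv₁R : (v₁ : ℝ) = σ ^ 2 / n₁ := Real.coe_toNNReal _ (by positivity)
  have hv₂R : (v₂ : ℝ) = σ ^ 2 / n₂ := Real.coe_toNNReal _ (by positivity)
  set N : ℝ := (n₁ : ℝ) + n₂ with hNdef
  have hN0 : (0:ℝ) < N := by positivity
  -- independence and maps
  have hfmeas : ∀ i, Measurable (![X₁, X₂, Y₁, Y₂] i) := by
    intro i; fin_cases i <;> assumption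
  have hIndX : IndepFun X₁ X₂ (P μ₁ μ₂) := by
    have := (hIndep μ₁ μ₂).indepFun (i := 0) (j := 1) (by decide)
    simpa using this
  have hIndY : IndepFun Y₁ Y₂ (P μ₁ μ₂) := by
    have := (hIndep μ₁ μ₂).indepFun (i := 2) (j := 3) (by decide)
    simpa using this
  have hIndXY : IndepFun (fun ω => (X₁ ω, X₂ ω)) (fun ω => (Y₁ ω, Y₂ ω)) (P μ₁ μ₂) := by
    have := (hIndep μ₁ μ₂).indepFun_prodMk_prodMk hfmeas 0 1 2 3
      (by decide) (by decide) (by decide) (by decide)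
    simpa using this
  have hmapX : (P μ₁ μ₂).map (fun ω => (X₁ ω, X₂ ω)) = (gaussianReal μ₁ v₁).prod (gaussianReal μ₂ v₁) := by
    rw [(indepFun_iff_map_prod_eq_prod_map_map hmX₁.aemeasurable hmX₂.aemeasurable).mp hIndX,
      hX₁ μ₁ μ₂, hX₂ μ₁ μ₂]
  have hmapY : (P μ₁ μ₂).map (fun ω => (Y₁ ω, Y₂ ω)) = (gaussianReal μ₁ v₂).prod (gaussianReal μ₂ v₂) := by
    rw [(indepFun_iff_map_prod_eq_prod_map_map hmY₁.aemeasurable hmY₂.aemeasurable).mp hIndY,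
      hY₁ μ₁ μ₂, hY₂ μ₁ μ₂]
  set T : Ω → (ℝ × ℝ) × (ℝ × ℝ) := fun ω => ((X₁ ω, X₂ ω), (Y₁ ω, Y₂ ω)) with hTdef
  have hTm : Measurable T := ((hmX₁.prodMk hmX₂).prodMk (hmY₁.prodMk hmY₂))
  have hmapT : (P μ₁ μ₂).map T = ((gaussianReal μ₁ v₁).prod (gaussianReal μ₂ v₁)).prod ((gaussianReal μ₁ v₂).prod (gaussianReal μ₂ v₂)) := by
    rw [← hmapX, ← hmapY]
    exact (indepFun_iff_map_prod_eq_prod_map_map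
      (hmX₁.prodMk hmX₂).aemeasurable (hmY₁.prodMk hmY₂).aemeasurable).mp hIndXY
  -- the function on the product space
  set g : (ℝ × ℝ) × (ℝ × ℝ) → ℝ := fun p =>
    ((n₁ * max p.1.1 p.1.2 + n₂ * (if p.1.2 ≤ p.1.1 then p.2.1 else p.2.2)) / N
      - (if p.1.2 ≤ p.1.1 then μ₁ else μ₂)) ^ 2 with hgdef
  have hsetm : MeasurableSet {p : (ℝ × ℝ) × (ℝ × ℝ) | p.1.2 ≤ p.1.1} :=
    measurableSet_le measurable_fst.snd measurable_fst.fst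
  have hgm : Measurable g := by
    apply Measurable.pow_const
    apply Measurable.sub
    · apply Measurable.div_const
      exact ((measurable_fst.fst.max measurable_fst.snd).const_mul _).add
        ((Measurable.ite hsetm measurable_snd.fst measurable_snd.snd).const_mul _)
    · exact Measurable.ite hsetm measurable_const measurable_const
  -- rewrite the integral as an integral over the product measure
  have hrw : (∫ ω, ((n₁ * max (X₁ ω) (X₂ ω)
        + n₂ * (if X₁ ω ≥ X₂ ω then Y₁ ω else Y₂ ω)) / N
        - (if X₁ ω ≥ X₂ ω then μ₁ else μ₂)) ^ 2 ∂(P μ₁ μ₂))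
      = ∫ p, g p ∂(((gaussianReal μ₁ v₁).prod (gaussianReal μ₂ v₁)).prod ((gaussianReal μ₁ v₂).prod (gaussianReal μ₂ v₂))) := by
    rw [← hmapT, integral_map hTm.aemeasurable hgm.aestronglyMeasurable]
  rw [hrw]
  -- integrability of g
  have hsq_int : ∀ (m : ℝ) (v : ℝ≥0), v ≠ 0 →
      Integrable (fun x : ℝ => x ^ 2) (gaussianReal m v) := by
    intro m v hv
    rw [my_integrable_shift m]
    have h1 : (fun x : ℝ => (x + m) ^ 2)
        = fun x : ℝ => (x ^ 2 + (2 * m) * x) + m ^ 2 := by funext x; ring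
    rw [h1]
    exact ((my_integrable_sq hv).add ((my_integrable_id hv).const_mul _)).add
      (integrable_const _)
  have hi11 : Integrable (fun p : (ℝ × ℝ) × (ℝ × ℝ) => p.1.1 ^ 2)
      (((gaussianReal μ₁ v₁).prod (gaussianReal μ₂ v₁)).prod ((gaussianReal μ₁ v₂).prod (gaussianReal μ₂ v₂))) := by
    have h := my_fst_sq_int (ν := (gaussianReal μ₂ v₁)) (hsq_int μ₁ v₁ hv₁)
    have := h.mul_prod (integrable_const (1:ℝ) (μ := (gaussianReal μ₁ v₂).prod (gaussianReal μ₂ v₂)))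
    simpa using this
  have hi12 : Integrable (fun p : (ℝ × ℝ) × (ℝ × ℝ) => p.1.2 ^ 2)
      (((gaussianReal μ₁ v₁).prod (gaussianReal μ₂ v₁)).prod ((gaussianReal μ₁ v₂).prod (gaussianReal μ₂ v₂))) := by
    have h := my_snd_sq_int (μ := (gaussianReal μ₁ v₁)) (hsq_int μ₂ v₁ hv₁)
    have := h.mul_prod (integrable_const (1:ℝ) (μ := (gaussianReal μ₁ v₂).prod (gaussianReal μ₂ v₂)))
    simpa using this
  have hi21 : Integrable (fun p : (ℝ × ℝ) × (ℝ × ℝ) => p.2.1 ^ 2)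
      (((gaussianReal μ₁ v₁).prod (gaussianReal μ₂ v₁)).prod ((gaussianReal μ₁ v₂).prod (gaussianReal μ₂ v₂))) := by
    have h := my_fst_sq_int (ν := (gaussianReal μ₂ v₂)) (hsq_int μ₁ v₂ hv₂)
    have := (integrable_const (1:ℝ) (μ := (gaussianReal μ₁ v₁).prod (gaussianReal μ₂ v₁))).mul_prod h
    simpa using this
  have hi22 : Integrable (fun p : (ℝ × ℝ) × (ℝ × ℝ) => p.2.2 ^ 2)
      (((gaussianReal μ₁ v₁).prod (gaussianReal μ₂ v₁)).prod ((gaussianReal μ₁ v₂).prod (gaussianReal μ₂ v₂))) := by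
    have h := my_snd_sq_int (μ := (gaussianReal μ₁ v₂)) (hsq_int μ₂ v₂ hv₂)
    have := (integrable_const (1:ℝ) (μ := (gaussianReal μ₁ v₁).prod (gaussianReal μ₂ v₁))).mul_prod h
    simpa using this
  have hFint : Integrable (fun p : (ℝ × ℝ) × (ℝ × ℝ) =>
      3 * (p.1.1 ^ 2 + p.1.2 ^ 2 + ((p.2.1 ^ 2 + p.2.2 ^ 2) + (|μ₁| + |μ₂|) ^ 2)))
      (((gaussianReal μ₁ v₁).prod (gaussianReal μ₂ v₁)).prod ((gaussianReal μ₁ v₂).prod (gaussianReal μ₂ v₂))) :=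
    (((hi11.add hi12).add ((hi21.add hi22).add (integrable_const _))).const_mul 3)
  have hgint : Integrable g (((gaussianReal μ₁ v₁).prod (gaussianReal μ₂ v₁)).prod ((gaussianReal μ₁ v₂).prod (gaussianReal μ₂ v₂))) := by
    refine hFint.mono' hgm.aestronglyMeasurable (Filter.Eventually.of_forall fun p => ?_)
    rw [hgdef, Real.norm_eq_abs, abs_of_nonneg (sq_nonneg _)]
    have hM : (max p.1.1 p.1.2) ^ 2 ≤ p.1.1 ^ 2 + p.1.2 ^ 2 := by
      rcases max_cases p.1.1 p.1.2 with ⟨h, _⟩ | ⟨h, _⟩ <;> rw [h] <;> nlinarith [sq_nonneg p.1.1, sq_nonneg p.1.2]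
    have hs : (if p.1.2 ≤ p.1.1 then p.2.1 else p.2.2) ^ 2 ≤ p.2.1 ^ 2 + p.2.2 ^ 2 := by
      by_cases h : p.1.2 ≤ p.1.1 <;> simp [h] <;> nlinarith [sq_nonneg p.2.1, sq_nonneg p.2.2]
    have hm1 : μ₁ ^ 2 ≤ (|μ₁| + |μ₂|) ^ 2 := by
      rw [← sq_abs μ₁]
      exact pow_le_pow_left₀ (abs_nonneg μ₁) (by linarith [abs_nonneg μ₂]) 2
    have hm2 : μ₂ ^ 2 ≤ (|μ₁| + |μ₂|) ^ 2 := by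
      rw [← sq_abs μ₂]
      exact pow_le_pow_left₀ (abs_nonneg μ₂) (by linarith [abs_nonneg μ₁]) 2
    have hm : (if p.1.2 ≤ p.1.1 then μ₁ else μ₂) ^ 2 ≤ (|μ₁| + |μ₂|) ^ 2 := by
      by_cases h : p.1.2 ≤ p.1.1
      · rw [if_pos h]; exact hm1
      · rw [if_neg h]; exact hm2
    have hb := my_bound_aux (n₁ : ℝ) (n₂ : ℝ) (max p.1.1 p.1.2)
      (if p.1.2 ≤ p.1.1 then p.2.1 else p.2.2) (if p.1.2 ≤ p.1.1 then μ₁ else μ₂) hn₁R hn₂R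
    rw [← hNdef] at hb
    linarith
  -- Fubini
  rw [MeasureTheory.integral_prod g hgint]
  -- inner integral
  have hinner : ∀ x : ℝ × ℝ, (∫ y, g (x, y) ∂((gaussianReal μ₁ v₂).prod (gaussianReal μ₂ v₂)))
      = (n₁ / N) ^ 2 * (if x.2 ≤ x.1 then (x.1 - μ₁) ^ 2 else (x.2 - μ₂) ^ 2)
        + (n₂ / N) ^ 2 * (v₂ : ℝ) := by
    intro x
    by_cases hx : x.2 ≤ x.1
    · have h1 : (fun y : ℝ × ℝ => g (x, y))
          = fun y : ℝ × ℝ => ((n₁ * x.1 + n₂ * y.1) / N - μ₁) ^ 2 := by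
        funext y
        rw [hgdef]
        simp only [if_pos hx, max_eq_left hx]
      rw [h1, if_pos hx,
        integral_fun_fst (f := fun y : ℝ => ((n₁ * x.1 + n₂ * y) / N - μ₁) ^ 2)]
      have h2 : (fun y : ℝ => ((n₁ * x.1 + n₂ * y) / N - μ₁) ^ 2)
          = fun y : ℝ => ((n₁ * (x.1 - μ₁) / N) + (n₂ / N) * (y - μ₁)) ^ 2 := by
        funext y
        field_simp
        ring
      rw [h2, my_key_inner hv₂]
      simp only [measure_univ, ENNReal.toReal_one, probReal_univ, one_smul]
      field_simp
    · have h1 : (fun y : ℝ × ℝ => g (x, y))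
          = fun y : ℝ × ℝ => ((n₁ * x.2 + n₂ * y.2) / N - μ₂) ^ 2 := by
        funext y
        rw [hgdef]
        simp only [if_neg hx, max_eq_right (le_of_not_ge hx)]
      rw [h1, if_neg hx,
        integral_fun_snd (f := fun y : ℝ => ((n₁ * x.2 + n₂ * y) / N - μ₂) ^ 2)]
      have h2 : (fun y : ℝ => ((n₁ * x.2 + n₂ * y) / N - μ₂) ^ 2)
          = fun y : ℝ => ((n₁ * (x.2 - μ₂) / N) + (n₂ / N) * (y - μ₂)) ^ 2 := by
        funext y
        field_simp
        ring
      rw [h2, my_key_inner hv₂]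
      simp only [measure_univ, ENNReal.toReal_one, probReal_univ, one_smul]
      field_simp
  rw [integral_congr_ae (Filter.Eventually.of_forall hinner)]
  -- outer integral
  have hφm : Measurable (fun x : ℝ × ℝ =>
      if x.2 ≤ x.1 then (x.1 - μ₁) ^ 2 else (x.2 - μ₂) ^ 2) :=
    Measurable.ite (measurableSet_le measurable_snd measurable_fst)
      ((measurable_fst.sub_const μ₁).pow_const 2) ((measurable_snd.sub_const μ₂).pow_const 2)
  have hφi : Integrable (fun x : ℝ × ℝ =>
      if x.2 ≤ x.1 then (x.1 - μ₁) ^ 2 else (x.2 - μ₂) ^ 2) ((gaussianReal μ₁ v₁).prod (gaussianReal μ₂ v₁)) := by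
    have hb1 : Integrable (fun x : ℝ × ℝ => (x.1 - μ₁) ^ 2 + (x.2 - μ₂) ^ 2) ((gaussianReal μ₁ v₁).prod (gaussianReal μ₂ v₁)) := by
      have ha : Integrable (fun x : ℝ × ℝ => (x.1 - μ₁) ^ 2) ((gaussianReal μ₁ v₁).prod (gaussianReal μ₂ v₁)) := by
        have := (my_integrable_sub_sq hv₁ μ₁).mul_prod (integrable_const (1:ℝ) (μ := (gaussianReal μ₂ v₁)))
        simpa using this
      have hbb : Integrable (fun x : ℝ × ℝ => (x.2 - μ₂) ^ 2) ((gaussianReal μ₁ v₁).prod (gaussianReal μ₂ v₁)) := by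
        have := (integrable_const (1:ℝ) (μ := (gaussianReal μ₁ v₁))).mul_prod (my_integrable_sub_sq hv₁ μ₂)
        simpa using this
      exact ha.add hbb
    refine hb1.mono' hφm.aestronglyMeasurable (Filter.Eventually.of_forall fun x => ?_)
    rw [Real.norm_eq_abs]
    by_cases h : x.2 ≤ x.1
    · rw [if_pos h, abs_of_nonneg (sq_nonneg _)]
      nlinarith [sq_nonneg (x.2 - μ₂)]
    · rw [if_neg h, abs_of_nonneg (sq_nonneg _)]
      nlinarith [sq_nonneg (x.1 - μ₁)]
  rw [integral_add (hφi.const_mul _) (integrable_const _), integral_const, integral_const_mul,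
    my_sym hv₁ μ₁ μ₂]
  simp only [measure_univ, ENNReal.toReal_one, probReal_univ, one_smul]
  rw [hv₁R, hv₂R, hNdef]
  field_simp
end

section
/- For every (μ₁, μ₂) ∈ ℝ², E[(max(X̄₁, X̄₂) − μ_S)²] = σ²/n₁. Consequently, the single-stage estimator δ₀ = X̄_S is uniformly dominated by δ_M = (n₁X̄_S + n₂Ȳ)/(n₁+n₂): R((μ₁,μ₂), δ_M) = σ²/(n₁+n₂) < σ²/n₁ = R((μ₁,μ₂), δ₀) for all (μ₁,μ₂) ∈ ℝ². -/
open MeasureTheory ProbabilityTheory Real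
open scoped NNReal ENNReal

lemma aux_integral_gaussianReal {μ : ℝ} {v : ℝ≥0} (hv : v ≠ 0) (g : ℝ → ℝ) :
    ∫ x, g x ∂(gaussianReal μ v) = ∫ x, gaussianPDFReal μ v x * g x := by
  rw [gaussianReal_of_var_ne_zero μ hv]
  have h : (gaussianPDF μ v)
      = fun x => ((Real.toNNReal (gaussianPDFReal μ v x) : ℝ≥0) : ℝ≥0∞) := by
    ext x; rfl
  rw [h, integral_withDensity_eq_integral_smul
    ((measurable_gaussianPDFReal μ v).real_toNNReal) g]
  congr 1; ext x
  rw [NNReal.smul_def, smul_eq_mul, Real.coe_toNNReal _ (gaussianPDFReal_nonneg μ v x)]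

lemma aux_integrable_gaussianReal {μ : ℝ} {v : ℝ≥0} (hv : v ≠ 0) {g : ℝ → ℝ}
    (hg : Integrable (fun x => gaussianPDFReal μ v x * g x)) :
    Integrable g (gaussianReal μ v) := by
  rw [gaussianReal_of_var_ne_zero μ hv]
  have h : (gaussianPDF μ v)
      = fun x => ((Real.toNNReal (gaussianPDFReal μ v x) : ℝ≥0) : ℝ≥0∞) := by
    ext x; rfl
  rw [h, integrable_withDensity_iff_integrable_smul
    ((measurable_gaussianPDFReal μ v).real_toNNReal)]
  refine hg.congr (Filter.Eventually.of_forall fun x => ?_)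
  show _ = _ • _
  rw [NNReal.smul_def, smul_eq_mul, Real.coe_toNNReal _ (gaussianPDFReal_nonneg μ v x)]

lemma aux_int_sq_exp {b : ℝ} (hb : 0 < b) :
    ∫ x : ℝ, x ^ 2 * Real.exp (-b * x ^ 2) = b ^ (-(3:ℝ)/2) * Real.sqrt π / 2 := by
  have h : ∫ x : ℝ, x ^ 2 * Real.exp (-b * x ^ 2)
      = ∫ x : ℝ, |x| ^ 2 * Real.exp (-b * |x| ^ 2) := by
    congr 1; ext x; rw [sq_abs]
  rw [h, integral_comp_abs (f := fun x => x ^ 2 * Real.exp (-b * x ^ 2))]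
  have h2 : ∀ x ∈ Set.Ioi (0:ℝ), x ^ 2 * Real.exp (-b * x ^ 2)
      = x ^ (2:ℝ) * Real.exp (-b * x ^ (2:ℝ)) := by
    intro x hx
    rw [Real.rpow_two]
  rw [setIntegral_congr_fun measurableSet_Ioi h2,
    integral_rpow_mul_exp_neg_mul_rpow two_pos (by norm_num) hb]
  rw [show ((2:ℝ)+1)/2 = 1/2 + 1 by ring, Real.Gamma_add_one (by norm_num),
    Real.Gamma_one_half_eq]
  ring_nf

lemma aux_integrable_sq_exp {b : ℝ} (hb : 0 < b) :
    Integrable (fun x : ℝ => x ^ 2 * Real.exp (-b * x ^ 2)) := by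
  have := integrable_rpow_mul_exp_neg_mul_sq hb (s := 2) (by norm_num)
  refine this.congr (Filter.Eventually.of_forall fun x => ?_)
  simp [Real.rpow_two]

lemma aux_arith {w : ℝ} (hw : 0 < w) :
    (Real.sqrt (2 * π * w))⁻¹ * ((((2:ℝ)*w)⁻¹) ^ (-(3:ℝ)/2) * Real.sqrt π / 2) = w := by
  have h2w : (0:ℝ) < 2 * w := by linarith
  have h1 : (((2:ℝ)*w)⁻¹) ^ (-(3:ℝ)/2) = (2*w) ^ ((3:ℝ)/2) := by
    rw [Real.inv_rpow h2w.le, ← Real.rpow_neg h2w.le]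
    norm_num
  have h2 : ((2:ℝ)*w) ^ ((3:ℝ)/2) = (2*w) * Real.sqrt (2*w) := by
    rw [show ((3:ℝ)/2) = 1 + 1/2 by ring, Real.rpow_add h2w, Real.rpow_one,
      ← Real.sqrt_eq_rpow]
  have h3 : Real.sqrt (2 * π * w) = Real.sqrt π * Real.sqrt (2*w) := by
    rw [← Real.sqrt_mul Real.pi_pos.le]
    congr 1; ring
  rw [h1, h2, h3]
  have hsp : (0:ℝ) < Real.sqrt π := Real.sqrt_pos.mpr Real.pi_pos
  have hs2w : (0:ℝ) < Real.sqrt (2*w) := Real.sqrt_pos.mpr h2w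
  field_simp

lemma aux_integrable_dirac {f : ℝ → ℝ} (a : ℝ) : Integrable f (Measure.dirac a) :=
  (integrable_const (f a)).congr (MeasureTheory.ae_eq_dirac f).symm

lemma aux_pdf_eq (μ : ℝ) (v : ℝ≥0) (hv : v ≠ 0) (g : ℝ → ℝ) (x : ℝ) :
    gaussianPDFReal μ v x * g (x - μ)
      = (fun z => (Real.sqrt (2 * π * v))⁻¹
          * (Real.exp (-(2*(v:ℝ))⁻¹ * z^2) * g z)) (x - μ) := by
  have hv' : (0:ℝ) < v := by
    exact_mod_cast pos_iff_ne_zero.mpr hv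
  rw [gaussianPDFReal]
  have h : -(x - μ)^2 / (2*(v:ℝ)) = -(2*(v:ℝ))⁻¹ * (x-μ)^2 := by
    field_simp
  simp only [h]
  ring

lemma aux_gauss_sq (μ : ℝ) (v : ℝ≥0) :
    ∫ x, (x - μ) ^ 2 ∂(gaussianReal μ v) = v := by
  by_cases hv : v = 0
  · simp [hv, gaussianReal_zero_var, integral_dirac]
  · have hv' : (0:ℝ) < v := by
      exact_mod_cast pos_iff_ne_zero.mpr hv
    have hb : (0:ℝ) < (2*(v:ℝ))⁻¹ := by positivity
    rw [aux_integral_gaussianReal hv]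
    have h0 : ∫ x, gaussianPDFReal μ v x * (x - μ)^2
        = ∫ x, (fun z => (Real.sqrt (2 * π * v))⁻¹
            * (Real.exp (-(2*(v:ℝ))⁻¹ * z^2) * z^2)) (x - μ) := by
      congr 1; ext x
      exact aux_pdf_eq μ v hv (fun z => z^2) x
    rw [h0, integral_sub_right_eq_self (μ := volume)
      (fun z => (Real.sqrt (2 * π * (v:ℝ)))⁻¹
        * (Real.exp (-(2*(v:ℝ))⁻¹ * z^2) * z^2)) μ]
    simp_rw [mul_comm (Real.exp _)]
    rw [integral_const_mul, aux_int_sq_exp hb]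
    exact aux_arith hv'

lemma aux_gauss_mean (μ : ℝ) (v : ℝ≥0) :
    ∫ x, (x - μ) ∂(gaussianReal μ v) = 0 := by
  by_cases hv : v = 0
  · simp [hv, gaussianReal_zero_var, integral_dirac]
  · have hv' : (0:ℝ) < v := by
      exact_mod_cast pos_iff_ne_zero.mpr hv
    have hb : (0:ℝ) < (2*(v:ℝ))⁻¹ := by positivity
    rw [aux_integral_gaussianReal hv]
    have h0 : ∫ x, gaussianPDFReal μ v x * (x - μ)
        = ∫ x, (fun z => (Real.sqrt (2 * π * v))⁻¹
            * (Real.exp (-(2*(v:ℝ))⁻¹ * z^2) * z)) (x - μ) := by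
      congr 1; ext x
      exact aux_pdf_eq μ v hv (fun z => z) x
    rw [h0, integral_sub_right_eq_self (μ := volume)
      (fun z => (Real.sqrt (2 * π * (v:ℝ)))⁻¹
        * (Real.exp (-(2*(v:ℝ))⁻¹ * z^2) * z)) μ]
    simp_rw [mul_comm (Real.exp _)]
    rw [integral_const_mul]
    have hodd : ∫ z : ℝ, z * Real.exp (-(2*(v:ℝ))⁻¹ * z^2) = 0 := by
      have h := integral_neg_eq_self
        (fun z : ℝ => z * Real.exp (-(2*(v:ℝ))⁻¹ * z^2)) volume
      simp only [neg_sq, neg_mul, integral_neg] at h ⊢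
      linarith
    rw [hodd, mul_zero]

lemma aux_gauss_integrable_g (μ : ℝ) (v : ℝ≥0) {g : ℝ → ℝ} (hgm : Measurable g)
    (hgi : Integrable (fun z : ℝ => Real.exp (-(2*(v:ℝ))⁻¹ * z^2) * g z)) :
    Integrable (fun x => g (x - μ)) (gaussianReal μ v) := by
  by_cases hv : v = 0
  · rw [hv, gaussianReal_zero_var]
    exact aux_integrable_dirac μ
  · apply aux_integrable_gaussianReal hv
    have h0 : (fun x => gaussianPDFReal μ v x * g (x - μ))
        = (fun z => (Real.sqrt (2 * π * v))⁻¹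
            * (Real.exp (-(2*(v:ℝ))⁻¹ * z^2) * g z)) ∘ (fun x => x - μ) := by
      ext x
      exact aux_pdf_eq μ v hv g x
    rw [h0]
    rw [(measurePreserving_sub_right volume μ).integrable_comp
      ((hgi.const_mul _).aestronglyMeasurable)]
    exact hgi.const_mul _

lemma aux_gauss_integrable_sq (μ : ℝ) (v : ℝ≥0) :
    Integrable (fun x => (x - μ)^2) (gaussianReal μ v) := by
  by_cases hv : v = 0
  · rw [hv, gaussianReal_zero_var]
    exact aux_integrable_dirac μ
  · have hv' : (0:ℝ) < v := by
      exact_mod_cast pos_iff_ne_zero.mpr hv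
    have hb : (0:ℝ) < (2*(v:ℝ))⁻¹ := by positivity
    apply aux_gauss_integrable_g μ v (measurable_id.pow_const 2)
    simp_rw [mul_comm (Real.exp _)]
    exact aux_integrable_sq_exp hb

lemma aux_gauss_integrable_id (μ : ℝ) (v : ℝ≥0) :
    Integrable (fun x => x - μ) (gaussianReal μ v) := by
  by_cases hv : v = 0
  · rw [hv, gaussianReal_zero_var]
    exact aux_integrable_dirac μ
  · have hv' : (0:ℝ) < v := by
      exact_mod_cast pos_iff_ne_zero.mpr hv
    have hb : (0:ℝ) < (2*(v:ℝ))⁻¹ := by positivity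
    apply aux_gauss_integrable_g μ v measurable_id
    simp_rw [mul_comm (Real.exp _)]
    exact integrable_mul_exp_neg_mul_sq hb

lemma aux_map_const_sub (s m : ℝ) (v : ℝ≥0) :
    Measure.map (fun x => s - x) (gaussianReal m v) = gaussianReal (s - m) v := by
  have h1 : (fun x : ℝ => s - x) = (fun y : ℝ => y + s) ∘ (fun x : ℝ => (-1 : ℝ) * x) := by
    ext x; simp only [Function.comp_apply]; ring
  have hmf : Measurable (fun x : ℝ => (-1:ℝ) * x) := measurable_const_mul _
  have hmg : Measurable (fun y : ℝ => y + s) := measurable_id.add_const s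
  rw [h1, ← Measure.map_map hmg hmf,
    gaussianReal_map_const_mul, gaussianReal_map_add_const]
  have h2 : (NNReal.mk ((-1:ℝ)^2) (sq_nonneg _)) = 1 := by ext; norm_num
  rw [h2, one_mul]
  congr 1; ring

noncomputable def gT (s : ℝ) : ℝ × ℝ → ℝ × ℝ := fun p => (s - p.2, s - p.1)

lemma aux_T_measurable (s : ℝ) : Measurable (gT s) :=
  (measurable_const.sub measurable_snd).prodMk (measurable_const.sub measurable_fst)

lemma aux_map_T (μ₁ μ₂ : ℝ) (v : ℝ≥0) :
    Measure.map (gT (μ₁ + μ₂)) ((gaussianReal μ₁ v).prod (gaussianReal μ₂ v))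
      = (gaussianReal μ₁ v).prod (gaussianReal μ₂ v) := by
  have h1 : gT (μ₁ + μ₂)
      = (Prod.map (fun x : ℝ => (μ₁+μ₂) - x) (fun x : ℝ => (μ₁+μ₂) - x)) ∘ Prod.swap := rfl
  have hf : Measurable (fun x : ℝ => (μ₁+μ₂) - x) := measurable_const.sub measurable_id
  have hm1 : Measurable (Prod.map (fun x : ℝ => (μ₁+μ₂) - x) (fun x : ℝ => (μ₁+μ₂) - x)) :=
    hf.prodMap hf
  rw [h1, ← Measure.map_map hm1 measurable_swap, Measure.prod_swap,
    ← Measure.map_prod_map _ _ hf hf,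
    aux_map_const_sub, aux_map_const_sub,
    show μ₁ + μ₂ - μ₂ = μ₁ by ring, show μ₁ + μ₂ - μ₁ = μ₂ by ring]

lemma aux_key_R2 (μ₁ μ₂ : ℝ) (v : ℝ≥0) :
    ∫ p : ℝ × ℝ, (if p.2 ≤ p.1 then (p.1 - μ₁)^2 else (p.2 - μ₂)^2)
      ∂((gaussianReal μ₁ v).prod (gaussianReal μ₂ v)) = v := by
  set γ₁ := gaussianReal μ₁ v with hγ₁
  set γ₂ := gaussianReal μ₂ v with hγ₂
  set ν := γ₁.prod γ₂ with hν
  set g : ℝ × ℝ → ℝ := fun p => if p.2 ≤ p.1 then (p.1 - μ₁)^2 else (p.2 - μ₂)^2 with hg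
  have hgm : Measurable g := Measurable.ite (measurableSet_le measurable_snd measurable_fst)
    ((measurable_fst.sub_const μ₁).pow_const 2) ((measurable_snd.sub_const μ₂).pow_const 2)
  have hInt1 : Integrable (fun p : ℝ × ℝ => (p.1 - μ₁)^2) ν := by
    simpa using (aux_gauss_integrable_sq μ₁ v).mul_prod (integrable_const (1:ℝ) (μ := γ₂))
  have hInt2 : Integrable (fun p : ℝ × ℝ => (p.2 - μ₂)^2) ν := by
    simpa using (integrable_const (1:ℝ) (μ := γ₁)).mul_prod (aux_gauss_integrable_sq μ₂ v)
  have hgint : Integrable g ν := by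
    refine (hInt1.add hInt2).mono' hgm.aestronglyMeasurable ?_
    refine Filter.Eventually.of_forall fun p => ?_
    simp only [hg, Real.norm_eq_abs, Pi.add_apply]
    split
    · rw [abs_of_nonneg (sq_nonneg _)]; nlinarith [sq_nonneg (p.2 - μ₂)]
    · rw [abs_of_nonneg (sq_nonneg _)]; nlinarith [sq_nonneg (p.1 - μ₁)]
  have hT : Measure.map (gT (μ₁+μ₂)) ν = ν := aux_map_T μ₁ μ₂ v
  have hgm' : AEStronglyMeasurable g (Measure.map (gT (μ₁+μ₂)) ν) := by
    rw [hT]; exact hgm.aestronglyMeasurable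
  have hcomp : ∫ p, g (gT (μ₁+μ₂) p) ∂ν = ∫ p, g p ∂ν := by
    rw [← integral_map (aux_T_measurable _).aemeasurable hgm', hT]
  have hgTint : Integrable (fun p => g (gT (μ₁+μ₂) p)) ν := by
    have h' : Integrable g (Measure.map (gT (μ₁+μ₂)) ν) := by rw [hT]; exact hgint
    have := (integrable_map_measure hgm' (aux_T_measurable _).aemeasurable).mp h'
    simpa [Function.comp_def] using this
  have hsum : ∀ p : ℝ × ℝ, g p + g (gT (μ₁+μ₂) p) = (p.1 - μ₁)^2 + (p.2 - μ₂)^2 := by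
    intro p
    simp only [hg, gT]
    rcases le_or_gt p.2 p.1 with h | h
    · rw [if_pos h, if_pos (show μ₁ + μ₂ - p.1 ≤ μ₁ + μ₂ - p.2 by linarith)]
      ring
    · rw [if_neg (not_le.mpr h),
        if_neg (show ¬(μ₁ + μ₂ - p.1 ≤ μ₁ + μ₂ - p.2) from fun hc => by linarith)]
      ring
  have hm1 : ∫ p : ℝ × ℝ, (p.1 - μ₁)^2 ∂ν = (v:ℝ) := by
    have h := integral_prod_mul (μ := γ₁) (ν := γ₂) (f := fun x => (x - μ₁)^2)
      (g := fun _ => (1:ℝ))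
    simpa [hν, hγ₁, hγ₂, aux_gauss_sq μ₁ v] using h
  have hm2 : ∫ p : ℝ × ℝ, (p.2 - μ₂)^2 ∂ν = (v:ℝ) := by
    have h := integral_prod_mul (μ := γ₁) (ν := γ₂) (f := fun _ => (1:ℝ))
      (g := fun x => (x - μ₂)^2)
    simpa [hν, hγ₁, hγ₂, aux_gauss_sq μ₂ v] using h
  have h2I : (∫ p, g p ∂ν) + (∫ p, g p ∂ν) = (v:ℝ) + v := by
    nth_rewrite 2 [← hcomp]
    rw [← integral_add hgint hgTint]
    calc ∫ p, (g p + g (gT (μ₁+μ₂) p)) ∂ν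
        = ∫ p : ℝ × ℝ, ((p.1 - μ₁)^2 + (p.2 - μ₂)^2) ∂ν := by
          exact integral_congr_ae (Filter.Eventually.of_forall hsum)
      _ = (v:ℝ) + v := by rw [integral_add hInt1 hInt2, hm1, hm2]
  linarith

lemma aux_comp_int {Ω α : Type*} [MeasurableSpace Ω] [MeasurableSpace α] {P : Measure Ω}
    {X : Ω → α} (hX : Measurable X) {γ : Measure α} (hmap : Measure.map X P = γ)
    {g : α → ℝ} (hg : Measurable g) (hgi : Integrable g γ) :
    Integrable (fun ω => g (X ω)) P := by
  have h := (integrable_map_measure (by rw [hmap]; exact hg.aestronglyMeasurable)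
    hX.aemeasurable).mp (by rw [hmap]; exact hgi)
  simpa [Function.comp_def] using h

lemma aux_comp_integral {Ω α : Type*} [MeasurableSpace Ω] [MeasurableSpace α] {P : Measure Ω}
    {X : Ω → α} (hX : Measurable X) {γ : Measure α} (hmap : Measure.map X P = γ)
    {g : α → ℝ} (hg : Measurable g) :
    ∫ ω, g (X ω) ∂P = ∫ x, g x ∂γ := by
  rw [← hmap, integral_map hX.aemeasurable (by rw [hmap]; exact hg.aestronglyMeasurable)]

noncomputable def gsel (μ₁ μ₂ : ℝ) : ℝ × ℝ → ℝ :=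
  fun p => if p.2 ≤ p.1 then (p.1 - μ₁)^2 else (p.2 - μ₂)^2

lemma aux_gsel_measurable (μ₁ μ₂ : ℝ) : Measurable (gsel μ₁ μ₂) :=
  Measurable.ite (measurableSet_le measurable_snd measurable_fst)
    ((measurable_fst.sub_const μ₁).pow_const 2) ((measurable_snd.sub_const μ₂).pow_const 2)

lemma aux_gsel_integrable (μ₁ μ₂ : ℝ) (v : ℝ≥0) :
    Integrable (gsel μ₁ μ₂) ((gaussianReal μ₁ v).prod (gaussianReal μ₂ v)) := by
  have hInt1 : Integrable (fun p : ℝ × ℝ => (p.1 - μ₁)^2)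
      ((gaussianReal μ₁ v).prod (gaussianReal μ₂ v)) := by
    simpa using (aux_gauss_integrable_sq μ₁ v).mul_prod
      (integrable_const (1:ℝ) (μ := gaussianReal μ₂ v))
  have hInt2 : Integrable (fun p : ℝ × ℝ => (p.2 - μ₂)^2)
      ((gaussianReal μ₁ v).prod (gaussianReal μ₂ v)) := by
    simpa using (integrable_const (1:ℝ) (μ := gaussianReal μ₁ v)).mul_prod
      (aux_gauss_integrable_sq μ₂ v)
  refine (hInt1.add hInt2).mono' (aux_gsel_measurable μ₁ μ₂).aestronglyMeasurable ?_
  refine Filter.Eventually.of_forall fun p => ?_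
  simp only [gsel, Real.norm_eq_abs, Pi.add_apply]
  split
  · rw [abs_of_nonneg (sq_nonneg _)]; nlinarith [sq_nonneg (p.2 - μ₂)]
  · rw [abs_of_nonneg (sq_nonneg _)]; nlinarith [sq_nonneg (p.1 - μ₁)]

lemma aux_key_gsel (μ₁ μ₂ : ℝ) (v : ℝ≥0) :
    ∫ p, gsel μ₁ μ₂ p ∂((gaussianReal μ₁ v).prod (gaussianReal μ₂ v)) = v :=
  aux_key_R2 μ₁ μ₂ v

/-- In the two-stage drop-the-losers model, for every `(μ₁, μ₂)`:
`E[(max(X̄₁,X̄₂) − μ_S)²] = σ²/n₁` (the risk of the single-stage estimator `δ₀ = X̄_S`),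
the risk of `δ_M = (n₁ X̄_S + n₂ Ȳ)/(n₁+n₂)` equals `σ²/(n₁+n₂)`, and
`σ²/(n₁+n₂) < σ²/n₁`; hence `δ₀` is uniformly dominated by `δ_M`. -/
theorem stmt_7 {Ω : Type} [MeasurableSpace Ω]
    (n₁ n₂ : ℕ) (hn₁ : 0 < n₁) (hn₂ : 0 < n₂) (σ : ℝ) (hσ : 0 < σ)
    (P : ℝ → ℝ → Measure Ω) (hP : ∀ μ₁ μ₂, IsProbabilityMeasure (P μ₁ μ₂))
    (X₁ X₂ Y₁ Y₂ : Ω → ℝ)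
    (hmX₁ : Measurable X₁) (hmX₂ : Measurable X₂)
    (hmY₁ : Measurable Y₁) (hmY₂ : Measurable Y₂)
    (hIndep : ∀ μ₁ μ₂ : ℝ, iIndepFun ![X₁, X₂, Y₁, Y₂] (P μ₁ μ₂))
    (hX₁ : ∀ μ₁ μ₂ : ℝ,
      Measure.map X₁ (P μ₁ μ₂) = gaussianReal μ₁ (Real.toNNReal (σ ^ 2 / n₁)))
    (hX₂ : ∀ μ₁ μ₂ : ℝ,
      Measure.map X₂ (P μ₁ μ₂) = gaussianReal μ₂ (Real.toNNReal (σ ^ 2 / n₁)))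
    (hY₁ : ∀ μ₁ μ₂ : ℝ,
      Measure.map Y₁ (P μ₁ μ₂) = gaussianReal μ₁ (Real.toNNReal (σ ^ 2 / n₂)))
    (hY₂ : ∀ μ₁ μ₂ : ℝ,
      Measure.map Y₂ (P μ₁ μ₂) = gaussianReal μ₂ (Real.toNNReal (σ ^ 2 / n₂)))
    (Ybar XS : Ω → ℝ) (μS : ℝ → ℝ → Ω → ℝ)
    (hYbar : Ybar = fun ω => if X₁ ω ≥ X₂ ω then Y₁ ω else Y₂ ω)
    (hXS : XS = fun ω => max (X₁ ω) (X₂ ω))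
    (hμS : μS = fun μ₁ μ₂ ω => if X₁ ω ≥ X₂ ω then μ₁ else μ₂) :
    ∀ μ₁ μ₂ : ℝ,
      (∫ ω, (XS ω - μS μ₁ μ₂ ω) ^ 2 ∂(P μ₁ μ₂)) = σ ^ 2 / n₁ ∧
      (∫ ω, ((n₁ * XS ω + n₂ * Ybar ω) / ((n₁ : ℝ) + n₂) - μS μ₁ μ₂ ω) ^ 2 ∂(P μ₁ μ₂)) =
        σ ^ 2 / ((n₁ : ℝ) + n₂) ∧
      σ ^ 2 / ((n₁ : ℝ) + n₂) < σ ^ 2 / n₁ := by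
  intro μ₁ μ₂
  haveI : IsProbabilityMeasure (P μ₁ μ₂) := hP μ₁ μ₂
  have hn₁R : (0:ℝ) < n₁ := by exact_mod_cast hn₁
  have hn₂R : (0:ℝ) < n₂ := by exact_mod_cast hn₂
  have hNpos : (0:ℝ) < (n₁:ℝ) + n₂ := by linarith
  have hNne : ((n₁:ℝ) + n₂) ≠ 0 := ne_of_gt hNpos
  set P' := P μ₁ μ₂ with hP'def
  set v₁ : ℝ≥0 := Real.toNNReal (σ ^ 2 / n₁) with hv₁def
  set v₂ : ℝ≥0 := Real.toNNReal (σ ^ 2 / n₂) with hv₂def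
  have hv₁R : (v₁:ℝ) = σ^2/n₁ := Real.coe_toNNReal _ (by positivity)
  have hv₂R : (v₂:ℝ) = σ^2/n₂ := Real.coe_toNNReal _ (by positivity)
  have hmf : ∀ i, Measurable (![X₁, X₂, Y₁, Y₂] i) := by
    intro i; fin_cases i <;> assumption
  have hpm : Measurable (fun ω => (X₁ ω, X₂ ω)) := hmX₁.prodMk hmX₂
  have hI12 : IndepFun X₁ X₂ P' := by
    have h := (hIndep μ₁ μ₂).indepFun (i := 0) (j := 1) (by decide)
    simpa using h
  have hmap : Measure.map (fun ω => (X₁ ω, X₂ ω)) P'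
      = (gaussianReal μ₁ v₁).prod (gaussianReal μ₂ v₁) := by
    rw [(indepFun_iff_map_prod_eq_prod_map_map hmX₁.aemeasurable hmX₂.aemeasurable).mp hI12,
      hX₁ μ₁ μ₂, hX₂ μ₁ μ₂]
  -- part 1
  have hpt1 : ∀ ω, (XS ω - μS μ₁ μ₂ ω)^2 = gsel μ₁ μ₂ (X₁ ω, X₂ ω) := by
    intro ω
    simp only [hXS, hμS, gsel, ge_iff_le]
    by_cases hc : X₂ ω ≤ X₁ ω
    · rw [if_pos hc, if_pos hc, max_eq_left hc]
    · rw [if_neg hc, if_neg hc, max_eq_right (le_of_not_ge hc)]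
  have hrisk1 : ∫ ω, (XS ω - μS μ₁ μ₂ ω)^2 ∂P' = σ^2/n₁ := by
    calc ∫ ω, (XS ω - μS μ₁ μ₂ ω)^2 ∂P'
        = ∫ ω, gsel μ₁ μ₂ (X₁ ω, X₂ ω) ∂P' :=
          integral_congr_ae (Filter.Eventually.of_forall hpt1)
      _ = ∫ p, gsel μ₁ μ₂ p ∂((gaussianReal μ₁ v₁).prod (gaussianReal μ₂ v₁)) :=
          aux_comp_integral hpm hmap (aux_gsel_measurable μ₁ μ₂)
      _ = (v₁:ℝ) := aux_key_gsel μ₁ μ₂ v₁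
      _ = σ^2/n₁ := hv₁R
  have h3 : σ^2/((n₁:ℝ)+n₂) < σ^2/n₁ :=
    div_lt_div_of_pos_left (by positivity) hn₁R (by linarith)
  refine ⟨hrisk1, ?_, h3⟩
  -- part 2
  -- part 2
  set a : ℝ := (n₁:ℝ)/((n₁:ℝ)+n₂) with hadef
  set b : ℝ := (n₂:ℝ)/((n₁:ℝ)+n₂) with hbdef
  set Z : Ω → ℝ := fun ω => if X₂ ω ≤ X₁ ω then X₁ ω - μ₁ else X₂ ω - μ₂ with hZdef
  set W : Ω → ℝ := fun ω => if X₂ ω ≤ X₁ ω then Y₁ ω - μ₁ else Y₂ ω - μ₂ with hWdef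
  set φI : ℝ×ℝ → ℝ := fun p => if p.2 ≤ p.1 then 1 else 0 with hφIdef
  set φZ1 : ℝ×ℝ → ℝ := fun p => if p.2 ≤ p.1 then p.1 - μ₁ else 0 with hφZ1def
  set φZ2 : ℝ×ℝ → ℝ := fun p => if p.2 ≤ p.1 then 0 else p.2 - μ₂ with hφZ2def
  have hsle : MeasurableSet {p : ℝ×ℝ | p.2 ≤ p.1} := measurableSet_le measurable_snd measurable_fst
  have hφIm : Measurable φI := Measurable.ite hsle measurable_const measurable_const
  have hφI'm : Measurable (fun p => 1 - φI p) := measurable_const.sub hφIm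
  have hφZ1m : Measurable φZ1 := Measurable.ite hsle (measurable_fst.sub_const μ₁) measurable_const
  have hφZ2m : Measurable φZ2 := Measurable.ite hsle measurable_const (measurable_snd.sub_const μ₂)
  -- independence of (X₁,X₂) with Y₁ and Y₂
  have hIp1 : IndepFun (fun ω => (X₁ ω, X₂ ω)) Y₁ P' := by
    have h := (hIndep μ₁ μ₂).indepFun_prodMk hmf 0 1 2 (by decide) (by decide)
    simpa using h
  have hIp2 : IndepFun (fun ω => (X₁ ω, X₂ ω)) Y₂ P' := by
    have h := (hIndep μ₁ μ₂).indepFun_prodMk hmf 0 1 3 (by decide) (by decide)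
    simpa using h
  have hcomp1 : ∀ (φ : ℝ×ℝ → ℝ) (ψ : ℝ → ℝ), Measurable φ → Measurable ψ →
      IndepFun (fun ω => φ (X₁ ω, X₂ ω)) (fun ω => ψ (Y₁ ω)) P' := by
    intro φ ψ hφ hψ
    have h := hIp1.comp hφ hψ
    simpa [Function.comp_def] using h
  have hcomp2 : ∀ (φ : ℝ×ℝ → ℝ) (ψ : ℝ → ℝ), Measurable φ → Measurable ψ →
      IndepFun (fun ω => φ (X₁ ω, X₂ ω)) (fun ω => ψ (Y₂ ω)) P' := by
    intro φ ψ hφ hψ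
    have h := hIp2.comp hφ hψ
    simpa [Function.comp_def] using h
  -- integrability of base pieces
  have hX1lin : Integrable (fun ω => X₁ ω - μ₁) P' :=
    aux_comp_int hmX₁ (hX₁ μ₁ μ₂) (measurable_id.sub_const μ₁) (aux_gauss_integrable_id μ₁ v₁)
  have hX2lin : Integrable (fun ω => X₂ ω - μ₂) P' :=
    aux_comp_int hmX₂ (hX₂ μ₁ μ₂) (measurable_id.sub_const μ₂) (aux_gauss_integrable_id μ₂ v₁)
  have hY1lin : Integrable (fun ω => Y₁ ω - μ₁) P' :=
    aux_comp_int hmY₁ (hY₁ μ₁ μ₂) (measurable_id.sub_const μ₁) (aux_gauss_integrable_id μ₁ v₂)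
  have hY2lin : Integrable (fun ω => Y₂ ω - μ₂) P' :=
    aux_comp_int hmY₂ (hY₂ μ₁ μ₂) (measurable_id.sub_const μ₂) (aux_gauss_integrable_id μ₂ v₂)
  have hY1sq : Integrable (fun ω => (Y₁ ω - μ₁)^2) P' :=
    aux_comp_int hmY₁ (hY₁ μ₁ μ₂) ((measurable_id.sub_const μ₁).pow_const 2)
      (aux_gauss_integrable_sq μ₁ v₂)
  have hY2sq : Integrable (fun ω => (Y₂ ω - μ₂)^2) P' :=
    aux_comp_int hmY₂ (hY₂ μ₁ μ₂) ((measurable_id.sub_const μ₂).pow_const 2)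
      (aux_gauss_integrable_sq μ₂ v₂)
  have hY1m : ∫ ω, (Y₁ ω - μ₁) ∂P' = 0 := by
    have h := aux_comp_integral (g := fun x => x - μ₁) hmY₁ (hY₁ μ₁ μ₂)
      (measurable_id.sub_const μ₁)
    rw [aux_gauss_mean μ₁ v₂] at h; exact h
  have hY2m : ∫ ω, (Y₂ ω - μ₂) ∂P' = 0 := by
    have h := aux_comp_integral (g := fun x => x - μ₂) hmY₂ (hY₂ μ₁ μ₂)
      (measurable_id.sub_const μ₂)
    rw [aux_gauss_mean μ₂ v₂] at h; exact h
  have hY1v : ∫ ω, (Y₁ ω - μ₁)^2 ∂P' = (v₂:ℝ) := by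
    have h := aux_comp_integral (g := fun x => (x - μ₁)^2) hmY₁ (hY₁ μ₁ μ₂)
      ((measurable_id.sub_const μ₁).pow_const 2)
    rw [aux_gauss_sq μ₁ v₂] at h; exact h
  have hY2v : ∫ ω, (Y₂ ω - μ₂)^2 ∂P' = (v₂:ℝ) := by
    have h := aux_comp_integral (g := fun x => (x - μ₂)^2) hmY₂ (hY₂ μ₁ μ₂)
      ((measurable_id.sub_const μ₂).pow_const 2)
    rw [aux_gauss_sq μ₂ v₂] at h; exact h
  have hIwint : Integrable (fun ω => φI (X₁ ω, X₂ ω)) P' := by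
    refine (integrable_const (1:ℝ)).mono' (hφIm.comp hpm).aestronglyMeasurable ?_
    refine Filter.Eventually.of_forall fun ω => ?_
    simp only [hφIdef, Real.norm_eq_abs]
    split <;> norm_num
  have hIw'int : Integrable (fun ω => 1 - φI (X₁ ω, X₂ ω)) P' :=
    (integrable_const (1:ℝ)).sub hIwint
  have hφZ1int : Integrable (fun ω => φZ1 (X₁ ω, X₂ ω)) P' := by
    refine hX1lin.abs.mono' ((hφZ1m.comp hpm).aestronglyMeasurable) ?_
    refine Filter.Eventually.of_forall fun ω => ?_
    simp only [hφZ1def, Real.norm_eq_abs]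
    split <;> simp [abs_abs, le_abs_self, abs_nonneg]
  have hφZ2int : Integrable (fun ω => φZ2 (X₁ ω, X₂ ω)) P' := by
    refine hX2lin.abs.mono' ((hφZ2m.comp hpm).aestronglyMeasurable) ?_
    refine Filter.Eventually.of_forall fun ω => ?_
    simp only [hφZ2def, Real.norm_eq_abs]
    split <;> simp [abs_abs, le_abs_self, abs_nonneg]
  -- Z squared
  have hZg : ∀ ω, Z ω ^ 2 = gsel μ₁ μ₂ (X₁ ω, X₂ ω) := by
    intro ω
    simp only [hZdef, gsel]
    split <;> rfl
  have hZ2int : Integrable (fun ω => Z ω ^ 2) P' :=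
    (aux_comp_int hpm hmap (aux_gsel_measurable μ₁ μ₂) (aux_gsel_integrable μ₁ μ₂ v₁)).congr
      (Filter.Eventually.of_forall fun ω => (hZg ω).symm)
  have hZ2v : ∫ ω, Z ω ^ 2 ∂P' = (v₁:ℝ) := by
    calc ∫ ω, Z ω ^ 2 ∂P' = ∫ ω, gsel μ₁ μ₂ (X₁ ω, X₂ ω) ∂P' :=
          integral_congr_ae (Filter.Eventually.of_forall hZg)
      _ = ∫ p, gsel μ₁ μ₂ p ∂((gaussianReal μ₁ v₁).prod (gaussianReal μ₂ v₁)) :=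
          aux_comp_integral hpm hmap (aux_gsel_measurable μ₁ μ₂)
      _ = (v₁:ℝ) := aux_key_gsel μ₁ μ₂ v₁
  -- W squared
  have hW2eq : ∀ ω, W ω ^ 2
      = φI (X₁ ω, X₂ ω) * (Y₁ ω - μ₁)^2 + (1 - φI (X₁ ω, X₂ ω)) * (Y₂ ω - μ₂)^2 := by
    intro ω
    simp only [hWdef, hφIdef]
    by_cases hc : X₂ ω ≤ X₁ ω <;> simp [hc]
  have hIW1 : IndepFun (fun ω => φI (X₁ ω, X₂ ω)) (fun ω => (Y₁ ω - μ₁)^2) P' :=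
    hcomp1 φI (fun y => (y - μ₁)^2) hφIm ((measurable_id.sub_const μ₁).pow_const 2)
  have hIW2 : IndepFun (fun ω => 1 - φI (X₁ ω, X₂ ω)) (fun ω => (Y₂ ω - μ₂)^2) P' :=
    hcomp2 (fun p => 1 - φI p) (fun y => (y - μ₂)^2) hφI'm
      ((measurable_id.sub_const μ₂).pow_const 2)
  have hIW1int : Integrable (fun ω => φI (X₁ ω, X₂ ω) * (Y₁ ω - μ₁)^2) P' :=
    hIW1.integrable_mul hIwint hY1sq
  have hIW2int : Integrable (fun ω => (1 - φI (X₁ ω, X₂ ω)) * (Y₂ ω - μ₂)^2) P' :=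
    hIW2.integrable_mul hIw'int hY2sq
  have hIW1v : ∫ ω, φI (X₁ ω, X₂ ω) * (Y₁ ω - μ₁)^2 ∂P'
      = (∫ ω, φI (X₁ ω, X₂ ω) ∂P') * ∫ ω, (Y₁ ω - μ₁)^2 ∂P' :=
    hIW1.integral_fun_mul_eq_mul_integral hIwint.aestronglyMeasurable hY1sq.aestronglyMeasurable
  have hIW2v : ∫ ω, (1 - φI (X₁ ω, X₂ ω)) * (Y₂ ω - μ₂)^2 ∂P'
      = (∫ ω, (1 - φI (X₁ ω, X₂ ω)) ∂P') * ∫ ω, (Y₂ ω - μ₂)^2 ∂P' :=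
    hIW2.integral_fun_mul_eq_mul_integral hIw'int.aestronglyMeasurable hY2sq.aestronglyMeasurable
  have hW2int : Integrable (fun ω => W ω ^ 2) P' :=
    (hIW1int.add hIW2int).congr
      (Filter.Eventually.of_forall fun ω => (hW2eq ω).symm)
  have hq : ∫ ω, (1 - φI (X₁ ω, X₂ ω)) ∂P' = 1 - ∫ ω, φI (X₁ ω, X₂ ω) ∂P' := by
    rw [integral_sub (integrable_const 1) hIwint]
    simp
  have hW2v : ∫ ω, W ω ^ 2 ∂P' = (v₂:ℝ) := by
    calc ∫ ω, W ω ^ 2 ∂P'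
        = ∫ ω, (φI (X₁ ω, X₂ ω) * (Y₁ ω - μ₁)^2
            + (1 - φI (X₁ ω, X₂ ω)) * (Y₂ ω - μ₂)^2) ∂P' :=
          integral_congr_ae (Filter.Eventually.of_forall hW2eq)
      _ = (∫ ω, φI (X₁ ω, X₂ ω) ∂P') * (v₂:ℝ)
            + (1 - ∫ ω, φI (X₁ ω, X₂ ω) ∂P') * (v₂:ℝ) := by
          rw [integral_add hIW1int hIW2int, hIW1v, hIW2v, hY1v, hY2v, hq]
      _ = (v₂:ℝ) := by ring
  -- cross term
  have hZWeq : ∀ ω, Z ω * W ω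
      = φZ1 (X₁ ω, X₂ ω) * (Y₁ ω - μ₁) + φZ2 (X₁ ω, X₂ ω) * (Y₂ ω - μ₂) := by
    intro ω
    simp only [hZdef, hWdef, hφZ1def, hφZ2def]
    by_cases hc : X₂ ω ≤ X₁ ω <;> simp [hc]
  have hIZW1 : IndepFun (fun ω => φZ1 (X₁ ω, X₂ ω)) (fun ω => Y₁ ω - μ₁) P' :=
    hcomp1 φZ1 (fun y => y - μ₁) hφZ1m (measurable_id.sub_const μ₁)
  have hIZW2 : IndepFun (fun ω => φZ2 (X₁ ω, X₂ ω)) (fun ω => Y₂ ω - μ₂) P' :=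
    hcomp2 φZ2 (fun y => y - μ₂) hφZ2m (measurable_id.sub_const μ₂)
  have hIZW1int : Integrable (fun ω => φZ1 (X₁ ω, X₂ ω) * (Y₁ ω - μ₁)) P' :=
    hIZW1.integrable_mul hφZ1int hY1lin
  have hIZW2int : Integrable (fun ω => φZ2 (X₁ ω, X₂ ω) * (Y₂ ω - μ₂)) P' :=
    hIZW2.integrable_mul hφZ2int hY2lin
  have hIZW1v : ∫ ω, φZ1 (X₁ ω, X₂ ω) * (Y₁ ω - μ₁) ∂P'
      = (∫ ω, φZ1 (X₁ ω, X₂ ω) ∂P') * ∫ ω, (Y₁ ω - μ₁) ∂P' :=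
    hIZW1.integral_fun_mul_eq_mul_integral hφZ1int.aestronglyMeasurable hY1lin.aestronglyMeasurable
  have hIZW2v : ∫ ω, φZ2 (X₁ ω, X₂ ω) * (Y₂ ω - μ₂) ∂P'
      = (∫ ω, φZ2 (X₁ ω, X₂ ω) ∂P') * ∫ ω, (Y₂ ω - μ₂) ∂P' :=
    hIZW2.integral_fun_mul_eq_mul_integral hφZ2int.aestronglyMeasurable hY2lin.aestronglyMeasurable
  have hZWint : Integrable (fun ω => Z ω * W ω) P' :=
    (hIZW1int.add hIZW2int).congr
      (Filter.Eventually.of_forall fun ω => (hZWeq ω).symm)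
  have hZWv : ∫ ω, Z ω * W ω ∂P' = 0 := by
    calc ∫ ω, Z ω * W ω ∂P'
        = ∫ ω, (φZ1 (X₁ ω, X₂ ω) * (Y₁ ω - μ₁) + φZ2 (X₁ ω, X₂ ω) * (Y₂ ω - μ₂)) ∂P' :=
          integral_congr_ae (Filter.Eventually.of_forall hZWeq)
      _ = 0 := by
          rw [integral_add hIZW1int hIZW2int, hIZW1v, hIZW2v, hY1m, hY2m]
          ring
  -- final expansion
  have hpt2 : ∀ ω, ((n₁ * XS ω + n₂ * Ybar ω) / ((n₁:ℝ) + n₂) - μS μ₁ μ₂ ω)^2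
      = a^2 * Z ω^2 + (2*a*b) * (Z ω * W ω) + b^2 * W ω^2 := by
    intro ω
    simp only [hXS, hYbar, hμS, hZdef, hWdef, hadef, hbdef, ge_iff_le]
    by_cases hc : X₂ ω ≤ X₁ ω
    · simp only [if_pos hc, max_eq_left hc]
      field_simp
      ring
    · simp only [if_neg hc, max_eq_right (le_of_not_ge hc)]
      field_simp
      ring
  calc ∫ ω, ((n₁ * XS ω + n₂ * Ybar ω) / ((n₁:ℝ) + n₂) - μS μ₁ μ₂ ω)^2 ∂P'
      = ∫ ω, (a^2 * Z ω^2 + (2*a*b) * (Z ω * W ω) + b^2 * W ω^2) ∂P' :=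
        integral_congr_ae (Filter.Eventually.of_forall hpt2)
    _ = a^2 * (v₁:ℝ) + (2*a*b) * 0 + b^2 * (v₂:ℝ) := by
        have hA : Integrable (fun ω => a^2 * Z ω^2) P' := hZ2int.const_mul _
        have hB : Integrable (fun ω => (2*a*b) * (Z ω * W ω)) P' := hZWint.const_mul _
        have hC : Integrable (fun ω => b^2 * W ω^2) P' := hW2int.const_mul _
        have hAB : Integrable (fun ω => a^2 * Z ω^2 + (2*a*b) * (Z ω * W ω)) P' := hA.add hB
        rw [integral_add hAB hC, integral_add hA hB,
          integral_const_mul, integral_const_mul, integral_const_mul, hZ2v, hW2v, hZWv]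
    _ = σ ^ 2 / ((n₁:ℝ) + n₂) := by
        rw [hv₁R, hv₂R, hadef, hbdef]
        field_simp
        ring
end

section
/- Fix θ ≥ 0, d₁ ∈ (−∞, 0], d₂ ∈ ℝ, σ > 0 and positive integers n₁, n₂, and let g(t) = [φ(√n₁(t+d₁−θ)/σ) + φ(√n₁(t+d₁+θ)/σ)] · φ(√n₂(t+d₂)/σ) · φ(√n₁ t/σ). Then (∫_{−∞}^{∞} t·g(t) dt) / (∫_{−∞}^{∞} g(t) dt) = (n₁θ/(2n₁+n₂)) · (1 − e^{−c})/(1 + e^{−c}) − (n₁d₁ + n₂d₂)/(2n₁+n₂), where c = (2θ/σ²) · n₁((n₁+n₂)d₁ − n₂d₂)/(2n₁+n₂). (This is the conditional expectation E[S₁ | (D₁,D₂) = (d₁,d₂)] of S₁ = X̄_S − μ_S given (D₁,D₂) in the two-stage drop-the-losers model.) -/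
open MeasureTheory Real

lemma gauss_int0 {p : ℝ} (hp : 0 < p) (m : ℝ) :
    ∫ t : ℝ, Real.exp (-p * (t - m) ^ 2) = Real.sqrt (π / p) := by
  have h : ∫ t : ℝ, Real.exp (-p * (t - m) ^ 2) = ∫ x : ℝ, Real.exp (-p * x ^ 2) :=
    integral_sub_right_eq_self (fun x : ℝ => Real.exp (-p * x ^ 2)) m
  rw [h, integral_gaussian]

lemma gauss_odd {p : ℝ} : ∫ x : ℝ, x * Real.exp (-p * x ^ 2) = 0 := by
  have h1 := integral_neg_eq_self (fun x : ℝ => x * Real.exp (-p * x ^ 2)) volume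
  simp only [neg_sq, neg_mul, integral_neg] at h1 ⊢
  linarith

lemma integrable_t_exp {p : ℝ} (hp : 0 < p) (m : ℝ) :
    Integrable (fun t : ℝ => t * Real.exp (-p * (t - m) ^ 2)) := by
  have h1 := (integrable_mul_exp_neg_mul_sq hp).comp_sub_right m
  have h2 := ((integrable_exp_neg_mul_sq hp).comp_sub_right m).const_mul m
  have heq : (fun t : ℝ => t * Real.exp (-p * (t - m) ^ 2))
      = fun t => (t - m) * Real.exp (-p * (t - m) ^ 2)
        + m * Real.exp (-p * (t - m) ^ 2) := by
    funext t; ring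
  rw [heq]; exact h1.add h2

lemma gauss_int1 {p : ℝ} (hp : 0 < p) (m : ℝ) :
    ∫ t : ℝ, t * Real.exp (-p * (t - m) ^ 2) = m * Real.sqrt (π / p) := by
  have h1 := (integrable_mul_exp_neg_mul_sq hp).comp_sub_right m
  have h2 := ((integrable_exp_neg_mul_sq hp).comp_sub_right m).const_mul m
  have heq : (fun t : ℝ => t * Real.exp (-p * (t - m) ^ 2))
      = fun t => (t - m) * Real.exp (-p * (t - m) ^ 2)
        + m * Real.exp (-p * (t - m) ^ 2) := by
    funext t; ring
  have h0 : ∫ t : ℝ, (t - m) * Real.exp (-p * (t - m) ^ 2) = 0 := by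
    have h : ∫ t : ℝ, (t - m) * Real.exp (-p * (t - m) ^ 2)
        = ∫ x : ℝ, x * Real.exp (-p * x ^ 2) :=
      integral_sub_right_eq_self (fun x : ℝ => x * Real.exp (-p * x ^ 2)) m
    rw [h, gauss_odd]
  rw [heq, integral_add h1 h2, h0, zero_add, integral_const_mul, gauss_int0 hp m]

/-- The conditional expectation `E[S₁ | (D₁,D₂) = (d₁,d₂)]` in the two-stage
drop-the-losers model: with
`g(t) = [φ(√n₁(t+d₁−θ)/σ) + φ(√n₁(t+d₁+θ)/σ)] φ(√n₂(t+d₂)/σ) φ(√n₁ t/σ)`,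
`(∫ t g(t) dt)/(∫ g(t) dt) = (n₁θ/(2n₁+n₂))(1−e^{−c})/(1+e^{−c}) − (n₁d₁+n₂d₂)/(2n₁+n₂)`
where `c = (2θ/σ²) n₁((n₁+n₂)d₁ − n₂d₂)/(2n₁+n₂)`. -/
theorem stmt_9 (n₁ n₂ : ℕ) (hn₁ : 0 < n₁) (hn₂ : 0 < n₂) (σ : ℝ) (hσ : 0 < σ)
    (θ : ℝ) (hθ : 0 ≤ θ) (d₁ : ℝ) (hd₁ : d₁ ≤ 0) (d₂ : ℝ)
    (g : ℝ → ℝ)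
    (hg : g = fun t =>
      (normPdf (Real.sqrt n₁ * (t + d₁ - θ) / σ) +
        normPdf (Real.sqrt n₁ * (t + d₁ + θ) / σ)) *
        normPdf (Real.sqrt n₂ * (t + d₂) / σ) * normPdf (Real.sqrt n₁ * t / σ))
    (c : ℝ)
    (hc : c = (2 * θ / σ ^ 2) * ((n₁ : ℝ) * (((n₁ : ℝ) + n₂) * d₁ - n₂ * d₂) /
      (2 * (n₁ : ℝ) + n₂))) :
    (∫ t, t * g t) / (∫ t, g t) =
      ((n₁ : ℝ) * θ / (2 * (n₁ : ℝ) + n₂)) *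
          ((1 - Real.exp (-c)) / (1 + Real.exp (-c))) -
        ((n₁ : ℝ) * d₁ + n₂ * d₂) / (2 * (n₁ : ℝ) + n₂) := by
  have ha : (0 : ℝ) < (n₁ : ℝ) := by exact_mod_cast hn₁
  have hb : (0 : ℝ) < (n₂ : ℝ) := by exact_mod_cast hn₂
  have hσ' : σ ≠ 0 := ne_of_gt hσ
  set A : ℝ := 2 * (n₁ : ℝ) + (n₂ : ℝ) with hA_def
  have hA : 0 < A := by rw [hA_def]; linarith
  set p : ℝ := A / (2 * σ ^ 2) with hp_def
  have hp : 0 < p := by rw [hp_def]; positivity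
  set K : ℝ := (Real.sqrt (2 * Real.pi))⁻¹ with hK_def
  have hKpos : 0 < K := by
    rw [hK_def]
    have : 0 < Real.sqrt (2 * Real.pi) := Real.sqrt_pos.mpr (by positivity)
    positivity
  set m₁ : ℝ := -((n₁ : ℝ) * (d₁ - θ) + (n₂ : ℝ) * d₂) / A with hm₁_def
  set m₂ : ℝ := -((n₁ : ℝ) * (d₁ + θ) + (n₂ : ℝ) * d₂) / A with hm₂_def
  set k₁ : ℝ := ((n₁ : ℝ) * (d₁ - θ) ^ 2 + (n₂ : ℝ) * d₂ ^ 2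
      - ((n₁ : ℝ) * (d₁ - θ) + (n₂ : ℝ) * d₂) ^ 2 / A) / (2 * σ ^ 2) with hk₁_def
  set k₂ : ℝ := ((n₁ : ℝ) * (d₁ + θ) ^ 2 + (n₂ : ℝ) * d₂ ^ 2
      - ((n₁ : ℝ) * (d₁ + θ) + (n₂ : ℝ) * d₂) ^ 2 / A) / (2 * σ ^ 2) with hk₂_def
  set C₁ : ℝ := K ^ 3 * Real.exp (-k₁) with hC₁_def
  set C₂ : ℝ := K ^ 3 * Real.exp (-k₂) with hC₂_def
  have hC₁pos : 0 < C₁ := by rw [hC₁_def]; positivity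
  have hC₂pos : 0 < C₂ := by rw [hC₂_def]; positivity
  have hsq : ∀ (nn : ℕ) (y : ℝ),
      (Real.sqrt nn * y / σ) ^ 2 = (nn : ℝ) * y ^ 2 / σ ^ 2 := by
    intro nn y
    rw [div_pow, mul_pow, Real.sq_sqrt (by positivity : (0:ℝ) ≤ (nn:ℝ))]
  -- key product identities
  have q : ∀ (e t : ℝ), Real.exp (-(Real.sqrt n₁ * (t + e) / σ) ^ 2 / 2)
        * Real.exp (-(Real.sqrt n₂ * (t + d₂) / σ) ^ 2 / 2)
        * Real.exp (-(Real.sqrt n₁ * t / σ) ^ 2 / 2)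
      = Real.exp (-(((n₁ : ℝ) * e ^ 2 + (n₂ : ℝ) * d₂ ^ 2
          - ((n₁ : ℝ) * e + (n₂ : ℝ) * d₂) ^ 2 / A) / (2 * σ ^ 2)))
        * Real.exp (-p * (t - -((n₁ : ℝ) * e + (n₂ : ℝ) * d₂) / A) ^ 2) := by
    intro e t
    rw [← Real.exp_add, ← Real.exp_add, ← Real.exp_add, Real.exp_eq_exp,
      hsq n₁ (t + e), hsq n₂ (t + d₂), hsq n₁ t, hp_def, hA_def]
    field_simp
    ring
  have q1 : ∀ t : ℝ, Real.exp (-(Real.sqrt n₁ * (t + d₁ - θ) / σ) ^ 2 / 2)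
        * Real.exp (-(Real.sqrt n₂ * (t + d₂) / σ) ^ 2 / 2)
        * Real.exp (-(Real.sqrt n₁ * t / σ) ^ 2 / 2)
      = Real.exp (-k₁) * Real.exp (-p * (t - m₁) ^ 2) := by
    intro t
    have := q (d₁ - θ) t
    rw [show t + (d₁ - θ) = t + d₁ - θ by ring] at this
    rw [this, hk₁_def, hm₁_def]
  have q2 : ∀ t : ℝ, Real.exp (-(Real.sqrt n₁ * (t + d₁ + θ) / σ) ^ 2 / 2)
        * Real.exp (-(Real.sqrt n₂ * (t + d₂) / σ) ^ 2 / 2)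
        * Real.exp (-(Real.sqrt n₁ * t / σ) ^ 2 / 2)
      = Real.exp (-k₂) * Real.exp (-p * (t - m₂) ^ 2) := by
    intro t
    have := q (d₁ + θ) t
    rw [show t + (d₁ + θ) = t + d₁ + θ by ring] at this
    rw [this, hk₂_def, hm₂_def]
  have hgeq : g = fun t => C₁ * Real.exp (-p * (t - m₁) ^ 2)
      + C₂ * Real.exp (-p * (t - m₂) ^ 2) := by
    funext t
    rw [hg]
    simp only [normPdf]
    rw [hC₁_def, hC₂_def, hK_def]
    linear_combination ((Real.sqrt (2 * Real.pi))⁻¹) ^ 3 * q1 t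
      + ((Real.sqrt (2 * Real.pi))⁻¹) ^ 3 * q2 t
  -- integrals
  have hnum : ∫ t, t * g t = C₁ * (m₁ * Real.sqrt (π / p))
      + C₂ * (m₂ * Real.sqrt (π / p)) := by
    simp only [hgeq]
    have hre : (fun t : ℝ => t * (C₁ * Real.exp (-p * (t - m₁) ^ 2)
        + C₂ * Real.exp (-p * (t - m₂) ^ 2)))
        = fun t => C₁ * (t * Real.exp (-p * (t - m₁) ^ 2))
          + C₂ * (t * Real.exp (-p * (t - m₂) ^ 2)) := by
      funext t; ring
    rw [hre, integral_add ((integrable_t_exp hp m₁).const_mul C₁)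
        ((integrable_t_exp hp m₂).const_mul C₂),
      integral_const_mul, integral_const_mul, gauss_int1 hp m₁, gauss_int1 hp m₂]
  have hden : ∫ t, g t = C₁ * Real.sqrt (π / p) + C₂ * Real.sqrt (π / p) := by
    simp only [hgeq]
    rw [integral_add (((integrable_exp_neg_mul_sq hp).comp_sub_right m₁).const_mul C₁)
        (((integrable_exp_neg_mul_sq hp).comp_sub_right m₂).const_mul C₂),
      integral_const_mul, integral_const_mul, gauss_int0 hp m₁, gauss_int0 hp m₂]
  have hspos : 0 < Real.sqrt (π / p) :=
    Real.sqrt_pos.mpr (by positivity)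
  have hdne : C₁ * Real.sqrt (π / p) + C₂ * Real.sqrt (π / p) ≠ 0 := by positivity
  have hk21 : k₂ = k₁ + c := by
    rw [hk₂_def, hk₁_def, hc, hA_def]
    field_simp
    ring
  have hC₂eq : C₂ = C₁ * Real.exp (-c) := by
    rw [hC₂_def, hC₁_def, hk21, neg_add, Real.exp_add]
    ring
  have h1E : (0 : ℝ) < 1 + Real.exp (-c) := by positivity
  rw [hnum, hden, div_eq_iff hdne, hC₂eq, hm₁_def, hm₂_def]
  field_simp
  ring
end

section
/- Fix d₁ ∈ (−∞, 0], d₂ ∈ ℝ, σ > 0 and positive integers n₁, n₂, and for θ ≥ 0 define ψ_θ(d₁,d₂) = (n₁θ/(2n₁+n₂)) · (1 − e^{c})/(1 + e^{c}) + n₁((n₁+n₂)d₁ − n₂d₂)/((n₁+n₂)(2n₁+n₂)), where c = (2θ/σ²) · n₁((n₁+n₂)d₁ − n₂d₂)/(2n₁+n₂). Then: (i) if d₁ ≤ n₂d₂/(n₁+n₂), the map θ ↦ ψ_θ(d₁,d₂) is nondecreasing on [0,∞) (strictly increasing when d₁ < n₂d₂/(n₁+n₂)), and inf_{θ≥0}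 ψ_θ(d₁,d₂) = n₁((n₁+n₂)d₁ − n₂d₂)/((n₁+n₂)(2n₁+n₂)), while sup_{θ≥0} ψ_θ(d₁,d₂) = +∞ whenever d₁ < n₂d₂/(n₁+n₂); (ii) if d₁ > n₂d₂/(n₁+n₂), the map θ ↦ ψ_θ(d₁,d₂) is strictly decreasing on [0,∞), with sup_{θ≥0} ψ_θ(d₁,d₂) = n₁((n₁+n₂)d₁ − n₂d₂)/((n₁+n₂)(2n₁+n₂)) and inf_{θ≥0} ψ_θ(d₁,d₂) = −∞. -/
open Real Set

private lemma frac_mono {α a b : ℝ} (hα : α ≤ 0) (hab : a ≤ b) :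
    (1 - Real.exp (α*a))/(1+Real.exp (α*a)) ≤ (1 - Real.exp (α*b))/(1+Real.exp (α*b)) := by
  have hx := Real.exp_pos (α*a)
  have hy := Real.exp_pos (α*b)
  have h : Real.exp (α*b) ≤ Real.exp (α*a) := Real.exp_le_exp.mpr (by nlinarith)
  rw [div_le_div_iff₀ (by linarith) (by linarith)]
  nlinarith

private lemma frac_pos {α θ : ℝ} (hα : α < 0) (hθ : 0 < θ) :
    0 < (1 - Real.exp (α*θ))/(1+Real.exp (α*θ)) := by
  have hx := Real.exp_pos (α*θ)
  have h : Real.exp (α*θ) < 1 := Real.exp_lt_one_iff.mpr (by nlinarith)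
  apply div_pos <;> linarith

private lemma frac_nonneg {α θ : ℝ} (hα : α ≤ 0) (hθ : 0 ≤ θ) :
    0 ≤ (1 - Real.exp (α*θ))/(1+Real.exp (α*θ)) := by
  have hx := Real.exp_pos (α*θ)
  have h : Real.exp (α*θ) ≤ 1 := Real.exp_le_one_iff.mpr (by nlinarith)
  apply div_nonneg <;> linarith

private lemma lemA (β C α : ℝ) (hβ : 0 < β) (hα : α ≤ 0) :
    MonotoneOn (fun θ => β*θ*((1-Real.exp (α*θ))/(1+Real.exp (α*θ))) + C) (Ici 0) ∧
    IsGLB ((fun θ => β*θ*((1-Real.exp (α*θ))/(1+Real.exp (α*θ))) + C) '' Ici 0) C := by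
  constructor
  · intro a ha b hb hab
    simp only [mem_Ici] at ha hb
    have h1 := frac_mono hα hab
    have h2 := frac_nonneg hα hb
    have h3 := frac_nonneg hα ha
    dsimp only
    nlinarith [mul_nonneg (sub_nonneg.2 hab) h2, mul_nonneg ha (sub_nonneg.2 h1)]
  · apply IsLeast.isGLB
    constructor
    · exact ⟨0, by simp, by simp⟩
    · rintro x ⟨θ, hθ, rfl⟩
      simp only [mem_Ici] at hθ
      have h2 := frac_nonneg hα hθ
      dsimp only
      nlinarith [mul_nonneg (mul_nonneg hβ.le hθ) h2]

private lemma lemB (β C α : ℝ) (hβ : 0 < β) (hα : α < 0) :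
    StrictMonoOn (fun θ => β*θ*((1-Real.exp (α*θ))/(1+Real.exp (α*θ))) + C) (Ici 0) ∧
    ∀ M : ℝ, ∃ θ ≥ (0:ℝ), M < β*θ*((1-Real.exp (α*θ))/(1+Real.exp (α*θ))) + C := by
  constructor
  · intro a ha b hb hab
    simp only [mem_Ici] at ha hb
    have h1 := frac_mono hα.le hab.le
    have h2 := frac_pos hα (lt_of_le_of_lt ha hab)
    have h3 := frac_nonneg hα.le ha
    dsimp only
    nlinarith [mul_pos (sub_pos.2 hab) h2, mul_nonneg ha (sub_nonneg.2 h1)]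
  · intro M
    have hG1 : 0 < (1 - Real.exp (α*1))/(1+Real.exp (α*1)) := frac_pos hα one_pos
    set G1 := (1 - Real.exp (α*1))/(1+Real.exp (α*1)) with hG1def
    refine ⟨max 1 ((M - C)/(β*G1) + 1), le_trans zero_le_one (le_max_left _ _), ?_⟩
    set θ := max 1 ((M - C)/(β*G1) + 1) with hθdef
    have hθ1 : 1 ≤ θ := le_max_left _ _
    have hθT : (M - C)/(β*G1) + 1 ≤ θ := le_max_right _ _
    have hGθ : G1 ≤ (1 - Real.exp (α*θ))/(1+Real.exp (α*θ)) := frac_mono hα.le hθ1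
    have hβG : 0 < β*G1 := mul_pos hβ hG1
    have key : β*((M - C)/(β*G1) + 1)*G1 = (M - C) + β*G1 := by
      field_simp
    have hθ0 : 0 < θ := lt_of_lt_of_le one_pos hθ1
    have step1 : β*θ*G1 ≤ β*θ*((1 - Real.exp (α*θ))/(1+Real.exp (α*θ))) := by
      apply mul_le_mul_of_nonneg_left hGθ (by positivity)
    have step2 : β*((M - C)/(β*G1) + 1)*G1 ≤ β*θ*G1 := by
      nlinarith
    nlinarith

private lemma frac_anti {α a b : ℝ} (hα : 0 ≤ α) (hab : a ≤ b) :
    (1 - Real.exp (α*b))/(1+Real.exp (α*b)) ≤ (1 - Real.exp (α*a))/(1+Real.exp (α*a)) := by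
  have hx := Real.exp_pos (α*a)
  have hy := Real.exp_pos (α*b)
  have h : Real.exp (α*a) ≤ Real.exp (α*b) := Real.exp_le_exp.mpr (by nlinarith)
  rw [div_le_div_iff₀ (by linarith) (by linarith)]
  nlinarith

private lemma frac_neg' {α θ : ℝ} (hα : 0 < α) (hθ : 0 < θ) :
    (1 - Real.exp (α*θ))/(1+Real.exp (α*θ)) < 0 := by
  have hx := Real.exp_pos (α*θ)
  have h : 1 < Real.exp (α*θ) := by
    have := Real.exp_lt_exp.mpr (show (0:ℝ) < α*θ by nlinarith)
    simpa using this
  apply div_neg_of_neg_of_pos <;> linarith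

private lemma frac_nonpos {α θ : ℝ} (hα : 0 ≤ α) (hθ : 0 ≤ θ) :
    (1 - Real.exp (α*θ))/(1+Real.exp (α*θ)) ≤ 0 := by
  have hx := Real.exp_pos (α*θ)
  have h : 1 ≤ Real.exp (α*θ) := Real.one_le_exp (by positivity)
  apply div_nonpos_of_nonpos_of_nonneg <;> linarith

private lemma lemC (β C α : ℝ) (hβ : 0 < β) (hα : 0 < α) :
    StrictAntiOn (fun θ => β*θ*((1-Real.exp (α*θ))/(1+Real.exp (α*θ))) + C) (Ici 0) ∧
    IsLUB ((fun θ => β*θ*((1-Real.exp (α*θ))/(1+Real.exp (α*θ))) + C) '' Ici 0) C ∧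
    ∀ M : ℝ, ∃ θ ≥ (0:ℝ), β*θ*((1-Real.exp (α*θ))/(1+Real.exp (α*θ))) + C < M := by
  refine ⟨?_, ?_, ?_⟩
  · intro a ha b hb hab
    simp only [mem_Ici] at ha hb
    have h1 := frac_anti hα.le hab.le
    have h2 := frac_neg' hα (lt_of_le_of_lt ha hab)
    have h3 := frac_nonpos hα.le ha
    dsimp only
    nlinarith [mul_pos (sub_pos.2 hab) (neg_pos.2 h2), mul_nonneg ha (sub_nonneg.2 h1)]
  · apply IsGreatest.isLUB
    constructor
    · exact ⟨0, by simp, by simp⟩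
    · rintro x ⟨θ, hθ, rfl⟩
      simp only [mem_Ici] at hθ
      have h2 := frac_nonpos hα.le hθ
      dsimp only
      nlinarith [mul_nonpos_of_nonneg_of_nonpos (mul_nonneg hβ.le hθ) h2]
  · intro M
    have hG1 : (1 - Real.exp (α*1))/(1+Real.exp (α*1)) < 0 := frac_neg' hα one_pos
    set G1 := (1 - Real.exp (α*1))/(1+Real.exp (α*1)) with hG1def
    refine ⟨max 1 ((M - C)/(β*G1) + 1), le_trans zero_le_one (le_max_left _ _), ?_⟩
    set θ := max 1 ((M - C)/(β*G1) + 1) with hθdef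
    have hθ1 : 1 ≤ θ := le_max_left _ _
    have hθT : (M - C)/(β*G1) + 1 ≤ θ := le_max_right _ _
    have hGθ : (1 - Real.exp (α*θ))/(1+Real.exp (α*θ)) ≤ G1 := frac_anti hα.le hθ1
    have hβG : β*G1 < 0 := mul_neg_of_pos_of_neg hβ hG1
    have hG1ne : G1 ≠ 0 := hG1.ne
    have key : β*((M - C)/(β*G1) + 1)*G1 = (M - C) + β*G1 := by
      field_simp
    have hθ0 : 0 < θ := lt_of_lt_of_le one_pos hθ1
    have step1 : β*θ*((1 - Real.exp (α*θ))/(1+Real.exp (α*θ))) ≤ β*θ*G1 := by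
      apply mul_le_mul_of_nonneg_left hGθ (by positivity)
    have step2 : β*θ*G1 ≤ β*((M - C)/(β*G1) + 1)*G1 := by
      nlinarith
    nlinarith

/-- Monotonicity and extremal values of
`ψ_θ(d₁,d₂) = (n₁θ/(2n₁+n₂))(1−e^c)/(1+e^c) + n₁((n₁+n₂)d₁−n₂d₂)/((n₁+n₂)(2n₁+n₂))`,
`c = (2θ/σ²) n₁((n₁+n₂)d₁−n₂d₂)/(2n₁+n₂)`, as a function of `θ ∈ [0,∞)`:
(i) if `d₁ ≤ n₂d₂/(n₁+n₂)` it is nondecreasing (strictly increasing under strict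
inequality), its infimum over `θ ≥ 0` is `n₁((n₁+n₂)d₁−n₂d₂)/((n₁+n₂)(2n₁+n₂))`, and its
supremum is `+∞` when the inequality is strict;
(ii) if `d₁ > n₂d₂/(n₁+n₂)` it is strictly decreasing, its supremum over `θ ≥ 0` is
`n₁((n₁+n₂)d₁−n₂d₂)/((n₁+n₂)(2n₁+n₂))`, and its infimum is `−∞`. -/
theorem stmt_10 (n₁ n₂ : ℕ) (hn₁ : 0 < n₁) (hn₂ : 0 < n₂) (σ : ℝ) (hσ : 0 < σ)
    (d₁ : ℝ) (hd₁ : d₁ ≤ 0) (d₂ : ℝ)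
    (ψ : ℝ → ℝ)
    (hψ : ψ = fun θ =>
      ((n₁ : ℝ) * θ / (2 * (n₁ : ℝ) + n₂)) *
          ((1 - Real.exp ((2 * θ / σ ^ 2) *
              ((n₁ : ℝ) * (((n₁ : ℝ) + n₂) * d₁ - n₂ * d₂) / (2 * (n₁ : ℝ) + n₂)))) /
            (1 + Real.exp ((2 * θ / σ ^ 2) *
              ((n₁ : ℝ) * (((n₁ : ℝ) + n₂) * d₁ - n₂ * d₂) / (2 * (n₁ : ℝ) + n₂))))) +
        (n₁ : ℝ) * (((n₁ : ℝ) + n₂) * d₁ - n₂ * d₂) /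
          (((n₁ : ℝ) + n₂) * (2 * (n₁ : ℝ) + n₂))) :
    (d₁ ≤ (n₂ : ℝ) * d₂ / ((n₁ : ℝ) + n₂) →
      MonotoneOn ψ (Ici 0) ∧
        (d₁ < (n₂ : ℝ) * d₂ / ((n₁ : ℝ) + n₂) → StrictMonoOn ψ (Ici 0)) ∧
        IsGLB (ψ '' Ici 0)
          ((n₁ : ℝ) * (((n₁ : ℝ) + n₂) * d₁ - n₂ * d₂) /
            (((n₁ : ℝ) + n₂) * (2 * (n₁ : ℝ) + n₂))) ∧
        (d₁ < (n₂ : ℝ) * d₂ / ((n₁ : ℝ) + n₂) → ∀ M : ℝ, ∃ θ ≥ (0 : ℝ), M < ψ θ)) ∧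
    ((n₂ : ℝ) * d₂ / ((n₁ : ℝ) + n₂) < d₁ →
      StrictAntiOn ψ (Ici 0) ∧
        IsLUB (ψ '' Ici 0)
          ((n₁ : ℝ) * (((n₁ : ℝ) + n₂) * d₁ - n₂ * d₂) /
            (((n₁ : ℝ) + n₂) * (2 * (n₁ : ℝ) + n₂))) ∧
        ∀ M : ℝ, ∃ θ ≥ (0 : ℝ), ψ θ < M) := by
  have hn₁' : (0:ℝ) < n₁ := by exact_mod_cast hn₁
  have hn₂' : (0:ℝ) < n₂ := by exact_mod_cast hn₂
  have hN : (0:ℝ) < 2*(n₁:ℝ)+n₂ := by linarith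
  have hP : (0:ℝ) < (n₁:ℝ)+n₂ := by linarith
  have hσ2 : (0:ℝ) < σ^2 := by positivity
  have hNe : (2*(n₁:ℝ)+n₂) ≠ 0 := hN.ne'
  have hσe : σ ≠ 0 := hσ.ne'
  set K : ℝ := (n₁:ℝ) * (((n₁:ℝ)+n₂)*d₁ - n₂*d₂) with hKdef
  set α : ℝ := 2*K/(σ^2*(2*(n₁:ℝ)+n₂)) with hαdef
  have hβ : (0:ℝ) < (n₁:ℝ)/(2*(n₁:ℝ)+n₂) := div_pos hn₁' hN
  have hψ' : ψ = fun θ => ((n₁:ℝ)/(2*(n₁:ℝ)+n₂))*θ*((1-Real.exp (α*θ))/(1+Real.exp (α*θ)))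
      + K/(((n₁:ℝ)+n₂)*(2*(n₁:ℝ)+n₂)) := by
    rw [hψ]
    funext θ
    have harg : (2*θ/σ^2)*(K/(2*(n₁:ℝ)+n₂)) = α*θ := by
      rw [hαdef]; field_simp
    rw [harg]; ring
  rw [hψ']
  constructor
  · intro h₁
    have h₁' : d₁*((n₁:ℝ)+n₂) ≤ (n₂:ℝ)*d₂ := (le_div_iff₀ hP).mp h₁
    have hKle : K ≤ 0 := by rw [hKdef]; nlinarith
    have hαle : α ≤ 0 := by
      rw [hαdef]; exact div_nonpos_of_nonpos_of_nonneg (by linarith) (by positivity)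
    obtain ⟨hmono, hglb⟩ := lemA ((n₁:ℝ)/(2*(n₁:ℝ)+n₂))
      (K/(((n₁:ℝ)+n₂)*(2*(n₁:ℝ)+n₂))) α hβ hαle
    have strictK : d₁ < (n₂:ℝ)*d₂/((n₁:ℝ)+n₂) → α < 0 := by
      intro h₂
      have h₂' : d₁*((n₁:ℝ)+n₂) < (n₂:ℝ)*d₂ := (lt_div_iff₀ hP).mp h₂
      have hKlt : K < 0 := by rw [hKdef]; nlinarith
      rw [hαdef]; exact div_neg_of_neg_of_pos (by linarith) (by positivity)
    refine ⟨hmono, ?_, hglb, ?_⟩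
    · intro h₂
      exact (lemB _ _ α hβ (strictK h₂)).1
    · intro h₂
      exact (lemB ((n₁:ℝ)/(2*(n₁:ℝ)+n₂)) (K/(((n₁:ℝ)+n₂)*(2*(n₁:ℝ)+n₂))) α hβ (strictK h₂)).2
  · intro h₁
    have h₁' : (n₂:ℝ)*d₂ < d₁*((n₁:ℝ)+n₂) := (div_lt_iff₀ hP).mp h₁
    have hKpos : 0 < K := by rw [hKdef]; nlinarith
    have hαpos : 0 < α := by
      rw [hαdef]; exact div_pos (by linarith) (by positivity)
    obtain ⟨hanti, hlub, hunb⟩ := lemC ((n₁:ℝ)/(2*(n₁:ℝ)+n₂))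
      (K/(((n₁:ℝ)+n₂)*(2*(n₁:ℝ)+n₂))) α hβ hαpos
    exact ⟨hanti, hlub, hunb⟩
end

section
/- Let T₁ = (n₁X̄_S + n₂Ȳ)/(n₁+n₂), T₂ = X̄_{3−S}, S the index of the selected treatment, and let δ be any Borel-measurable estimator with E[δ²] < ∞ for all (μ₁,μ₂). Define δ* = E[δ | (T₁, T₂, S)]. Then R((μ₁,μ₂), δ*) ≤ R((μ₁,μ₂), δ) for every (μ₁,μ₂) ∈ ℝ², with strict inequality at every (μ₁,μ₂) for which δ ≠ δ* with positive probability. In particular, any location and permutation equivariant estimator of μ_S that is not almost surely a function of (T₁, T₂, S) is dominated under squared error loss by its conditional expectation given (T₁, T₂, S). -/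
open MeasureTheory ProbabilityTheory Real

/-- Conditional expectation of an `L²` function is in `L²` (finite measure case),
proved by identifying it with `condExpL2`. -/
lemma memLp_two_condexp_aux {α : Type*} {m m0 : MeasurableSpace α} (hm : m ≤ m0)
    (μ : Measure α) [IsFiniteMeasure μ] {f : α → ℝ} (hf : MemLp f 2 μ) :
    MemLp (μ[f|m]) 2 μ := by
  haveI : SigmaFinite (μ.trim hm) := by infer_instance
  set g : α →₂[μ] ℝ := hf.toLp f with hg
  have hae : (condExpL2 ℝ ℝ hm g : α → ℝ) =ᵐ[μ] μ[f|m] := by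
    refine ae_eq_condExp_of_forall_setIntegral_eq hm (hf.integrable one_le_two)
      (fun s hs hμs => integrableOn_condExpL2_of_measure_ne_top hm hμs.ne g)
      (fun s hs hμs => ?_) (aestronglyMeasurable_condExpL2 hm g)
    rw [integral_condExpL2_eq hm g hs hμs.ne]
    exact setIntegral_congr_ae (hm s hs) ((hf.coeFn_toLp).mono fun x hx _ => hx)
  exact (Lp.memLp ((condExpL2 ℝ ℝ hm g : lpMeas ℝ ℝ m 2 μ) : Lp ℝ 2 μ)).ae_eq hae

lemma integrable_mul_of_memLp_two {α : Type*} {m0 : MeasurableSpace α} {μ : Measure α}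
    {u v : α → ℝ} (hu : MemLp u 2 μ) (hv : MemLp v 2 μ) :
    Integrable (fun ω => u ω * v ω) μ := by
  refine (hu.integrable_sq.add hv.integrable_sq).mono'
    (hu.aestronglyMeasurable.mul hv.aestronglyMeasurable) (Filter.Eventually.of_forall fun ω => ?_)
  simp only [norm_mul, Real.norm_eq_abs, Pi.add_apply]
  nlinarith [sq_nonneg (|u ω| - |v ω|), sq_abs (u ω), sq_abs (v ω),
    abs_nonneg (u ω), abs_nonneg (v ω)]

/-- Rao–Blackwellization in the two-stage drop-the-losers design: for any
square-integrable estimator `δ` of the selected treatment mean, the conditional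
expectation `δ* = E[δ | (T₁,T₂,S)]` has risk no larger than that of `δ` at every
parameter `(μ₁,μ₂)`, with strict inequality whenever `δ ≠ δ*` with positive
probability. -/
theorem stmt_15 {Ω : Type} [MeasurableSpace Ω]
    (n₁ n₂ : ℕ) (hn₁ : 0 < n₁) (hn₂ : 0 < n₂) (σ : ℝ) (hσ : 0 < σ)
    (P : ℝ → ℝ → Measure Ω) (hP : ∀ μ₁ μ₂, IsProbabilityMeasure (P μ₁ μ₂))
    (X₁ X₂ Y₁ Y₂ : Ω → ℝ)
    (hmX₁ : Measurable X₁) (hmX₂ : Measurable X₂)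
    (hmY₁ : Measurable Y₁) (hmY₂ : Measurable Y₂)
    (hIndep : ∀ μ₁ μ₂ : ℝ, iIndepFun ![X₁, X₂, Y₁, Y₂] (P μ₁ μ₂))
    (hX₁ : ∀ μ₁ μ₂ : ℝ,
      Measure.map X₁ (P μ₁ μ₂) = gaussianReal μ₁ (Real.toNNReal (σ ^ 2 / n₁)))
    (hX₂ : ∀ μ₁ μ₂ : ℝ,
      Measure.map X₂ (P μ₁ μ₂) = gaussianReal μ₂ (Real.toNNReal (σ ^ 2 / n₁)))
    (hY₁ : ∀ μ₁ μ₂ : ℝ,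
      Measure.map Y₁ (P μ₁ μ₂) = gaussianReal μ₁ (Real.toNNReal (σ ^ 2 / n₂)))
    (hY₂ : ∀ μ₁ μ₂ : ℝ,
      Measure.map Y₂ (P μ₁ μ₂) = gaussianReal μ₂ (Real.toNNReal (σ ^ 2 / n₂)))
    (Ybar XS T₁ T₂ : Ω → ℝ) (S : Ω → ℕ) (μS : ℝ → ℝ → Ω → ℝ)
    (hYbar : Ybar = fun ω => if X₁ ω ≥ X₂ ω then Y₁ ω else Y₂ ω)
    (hXS : XS = fun ω => max (X₁ ω) (X₂ ω))
    (hT₁ : T₁ = fun ω => ((n₁ : ℝ) * XS ω + n₂ * Ybar ω) / ((n₁ : ℝ) + n₂))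
    (hT₂ : T₂ = fun ω => min (X₁ ω) (X₂ ω))
    (hS : S = fun ω => if X₁ ω ≥ X₂ ω then 1 else 2)
    (hμS : μS = fun μ₁ μ₂ ω => if X₁ ω ≥ X₂ ω then μ₁ else μ₂)
    (mT : MeasurableSpace Ω)
    (hmT : mT = MeasurableSpace.comap (fun ω => (T₁ ω, T₂ ω, S ω)) inferInstance)
    (δ : ℝ × ℝ × ℝ → ℝ) (hδ : Measurable δ)
    (δdata : Ω → ℝ) (hδdata : δdata = fun ω => δ (X₁ ω, X₂ ω, Ybar ω))
    (hInt : ∀ μ₁ μ₂ : ℝ, Integrable (fun ω => (δdata ω) ^ 2) (P μ₁ μ₂)) :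
    ∀ μ₁ μ₂ : ℝ,
      (∫ ω, (MeasureTheory.condExp mT (P μ₁ μ₂) δdata ω - μS μ₁ μ₂ ω) ^ 2 ∂(P μ₁ μ₂)) ≤
        (∫ ω, (δdata ω - μS μ₁ μ₂ ω) ^ 2 ∂(P μ₁ μ₂)) ∧
      (¬ δdata =ᵐ[P μ₁ μ₂] MeasureTheory.condExp mT (P μ₁ μ₂) δdata →
        (∫ ω, (MeasureTheory.condExp mT (P μ₁ μ₂) δdata ω - μS μ₁ μ₂ ω) ^ 2 ∂(P μ₁ μ₂)) <
          ∫ ω, (δdata ω - μS μ₁ μ₂ ω) ^ 2 ∂(P μ₁ μ₂)) := by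
  intro μ₁ μ₂
  subst hT₁ hT₂ hS hμS hδdata hmT hYbar hXS
  beta_reduce
  haveI := hP μ₁ μ₂
  set μ := P μ₁ μ₂ with hμdef
  -- measurability of the relevant functions
  have hsetX := measurableSet_le hmX₂ hmX₁
  have hmYbar : Measurable (fun ω => if X₁ ω ≥ X₂ ω then Y₁ ω else Y₂ ω) :=
    Measurable.ite (p := fun ω => X₁ ω ≥ X₂ ω) hsetX hmY₁ hmY₂
  have hmXS := hmX₁.max hmX₂
  have hmT₁ := (((measurable_const (a := ((n₁:ℝ)))).mul hmXS).add ((measurable_const (a := (n₂:ℝ))).mul hmYbar)).div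
      (measurable_const (a := ((n₁:ℝ) + n₂)))
  have hmT₂ := hmX₁.min hmX₂
  have hmS : Measurable (fun ω => if X₁ ω ≥ X₂ ω then (1:ℕ) else 2) :=
    Measurable.ite hsetX measurable_const measurable_const
  set T₁ : Ω → ℝ := fun ω => ((n₁ : ℝ) * max (X₁ ω) (X₂ ω)
      + n₂ * (if X₁ ω ≥ X₂ ω then Y₁ ω else Y₂ ω)) / ((n₁ : ℝ) + n₂) with hT₁def
  set T₂ : Ω → ℝ := fun ω => min (X₁ ω) (X₂ ω) with hT₂def
  set S : Ω → ℕ := fun ω => if X₁ ω ≥ X₂ ω then 1 else 2 with hSdef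
  have hφ : Measurable (fun ω => (T₁ ω, T₂ ω, S ω)) := Measurable.prodMk hmT₁ (Measurable.prodMk hmT₂ hmS)
  -- the estimator
  set δdata : Ω → ℝ := fun ω => δ (X₁ ω, X₂ ω, if X₁ ω ≥ X₂ ω then Y₁ ω else Y₂ ω) with hδdef
  have hmf : Measurable δdata :=
    hδ.comp (Measurable.prodMk hmX₁ (Measurable.prodMk hmX₂ hmYbar))
  set mT := MeasurableSpace.comap (fun ω => (T₁ ω, T₂ ω, S ω)) inferInstance with hmTdef
  have hm : mT ≤ _ := measurable_iff_comap_le.mp hφ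
  haveI : SigmaFinite (μ.trim hm) := by infer_instance
  have hf2 : MemLp δdata 2 μ :=
    (memLp_two_iff_integrable_sq hmf.aestronglyMeasurable).mpr (hInt μ₁ μ₂)
  have hfint : Integrable δdata μ := hf2.integrable one_le_two
  -- the target
  set g : Ω → ℝ := fun ω => if X₁ ω ≥ X₂ ω then μ₁ else μ₂ with hgdef
  have hgS : ∀ ω, g ω = if S ω = 1 then μ₁ else μ₂ := by
    intro ω
    by_cases h : X₁ ω ≥ X₂ ω <;> simp [hgdef, hSdef, h]
  have hSm : Measurable[mT] S := by
    have hφm : Measurable[mT] (fun ω => (T₁ ω, T₂ ω, S ω)) :=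
      measurable_iff_comap_le.mpr le_rfl
    exact Measurable.comp (Measurable.comp measurable_snd measurable_snd) hφm
  have hgmT : StronglyMeasurable[mT] g := by
    have hmg : Measurable[mT] g := by
      have hfun : g = fun ω => if S ω = 1 then μ₁ else μ₂ := funext hgS
      rw [hfun]
      exact Measurable.ite (hSm (measurableSet_singleton 1)) measurable_const measurable_const
    exact Measurable.stronglyMeasurable hmg
  have hg2 : MemLp g 2 μ := by
    refine MemLp.of_bound (StronglyMeasurable.aestronglyMeasurable (hgmT.mono hm)) (max ‖μ₁‖ ‖μ₂‖)
      (Filter.Eventually.of_forall fun ω => ?_)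
    by_cases h : X₁ ω ≥ X₂ ω
    · simp only [hgdef, if_pos h]; exact le_max_left _ _
    · simp only [hgdef, if_neg h]; exact le_max_right _ _
  have hgint : Integrable g μ := hg2.integrable one_le_two
  -- conditional expectation
  set f' : Ω → ℝ := MeasureTheory.condExp mT μ δdata with hf'def
  have hf'2 : MemLp f' 2 μ := memLp_two_condexp_aux hm μ hf2
  have hf'm : StronglyMeasurable[mT] f' := stronglyMeasurable_condExp
  -- h and a
  set h : Ω → ℝ := fun ω => f' ω - g ω with hhdef
  set a : Ω → ℝ := fun ω => δdata ω - f' ω with hadef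
  have hhm : StronglyMeasurable[mT] h := hf'm.sub hgmT
  have hh2 : MemLp h 2 μ := hf'2.sub hg2
  have ha2 : MemLp a 2 μ := hf2.sub hf'2
  -- cross term is zero
  have hkey : ∫ ω, h ω * δdata ω ∂μ = ∫ ω, h ω * f' ω ∂μ := by
    have h1 : μ[(h * δdata)|mT] =ᵐ[μ] h * μ[δdata|mT] :=
      condExp_mul_of_stronglyMeasurable_left hhm (integrable_mul_of_memLp_two hh2 hf2) hfint
    calc ∫ ω, h ω * δdata ω ∂μ = ∫ ω, (h * δdata) ω ∂μ := rfl
      _ = ∫ ω, (μ[(h * δdata)|mT]) ω ∂μ := (integral_condExp hm).symm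
      _ = ∫ ω, (h * μ[δdata|mT]) ω ∂μ := integral_congr_ae h1
      _ = ∫ ω, h ω * f' ω ∂μ := rfl
  have hcross : ∫ ω, h ω * a ω ∂μ = 0 := by
    have heq : (fun ω => h ω * a ω) = fun ω => h ω * δdata ω - h ω * f' ω := by
      funext ω; simp only [hadef]; ring
    rw [heq, integral_sub (integrable_mul_of_memLp_two hh2 hf2)
      (integrable_mul_of_memLp_two hh2 hf'2), hkey, sub_self]
  -- Pythagoras
  have hint_ha : Integrable (fun ω => 2 * (h ω * a ω)) μ :=
    (integrable_mul_of_memLp_two hh2 ha2).const_mul 2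
  have hEq : ∫ ω, (δdata ω - g ω) ^ 2 ∂μ
      = (∫ ω, a ω ^ 2 ∂μ) + ∫ ω, h ω ^ 2 ∂μ := by
    have h1 : (fun ω => (δdata ω - g ω) ^ 2)
        = fun ω => a ω ^ 2 + (2 * (h ω * a ω) + h ω ^ 2) := by
      funext ω; simp only [hadef, hhdef]; ring
    have hsum2 : Integrable (fun ω => 2 * (h ω * a ω) + h ω ^ 2) μ :=
      hint_ha.add hh2.integrable_sq
    rw [h1, integral_add ha2.integrable_sq hsum2,
      integral_add hint_ha hh2.integrable_sq, integral_const_mul, hcross, mul_zero, zero_add]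
  have ha_nonneg : 0 ≤ ∫ ω, a ω ^ 2 ∂μ := integral_nonneg fun ω => sq_nonneg _
  constructor
  · calc ∫ ω, (MeasureTheory.condExp mT μ δdata ω - g ω) ^ 2 ∂μ
        = ∫ ω, h ω ^ 2 ∂μ := rfl
      _ ≤ (∫ ω, a ω ^ 2 ∂μ) + ∫ ω, h ω ^ 2 ∂μ := le_add_of_nonneg_left ha_nonneg
      _ = ∫ ω, (δdata ω - g ω) ^ 2 ∂μ := hEq.symm
  · intro hne
    have hpos : 0 < ∫ ω, a ω ^ 2 ∂μ := by
      rcases lt_or_eq_of_le ha_nonneg with hlt | heq0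
      · exact hlt
      · exfalso
        have hzero : (fun ω => a ω ^ 2) =ᵐ[μ] 0 :=
          (integral_eq_zero_iff_of_nonneg (fun ω => sq_nonneg _) ha2.integrable_sq).mp heq0.symm
        refine hne ?_
        filter_upwards [hzero] with ω hω
        have h0 : a ω = 0 := pow_eq_zero_iff (n := 2) (by norm_num) |>.mp hω
        have h2 : δdata ω - f' ω = 0 := h0
        have : δdata ω = f' ω := by linarith
        exact this
    calc ∫ ω, (MeasureTheory.condExp mT μ δdata ω - g ω) ^ 2 ∂μ
        = ∫ ω, h ω ^ 2 ∂μ := rfl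
      _ < (∫ ω, a ω ^ 2 ∂μ) + ∫ ω, h ω ^ 2 ∂μ := lt_add_of_pos_left _ hpos
      _ = ∫ ω, (δdata ω - g ω) ^ 2 ∂μ := hEq.symm
end
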